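/- arXiv:1701.00267 — 4 statements merged into one kernel-verified Lean document; each statement's English description precedes it below -/
import Mathlib

section
/- Let c be a C² positive function on an open set Ω. There exists α > 0 and an open subset Ω₀ ⊂ Ω on which -div(∇c/(c+α)²) > 0 pointwise if and only if there exists an open subset Ω̂ ⊂ Ω on which Δc < 2|∇c|²/c pointwise. -/
open MeasureTheory Real Set InnerProductSpace

noncomputable def vdiv {N : ℕ} (V : EuclideanSpace ℝ (Fin N) → EuclideanSpace ℝ (Fin N))
    (x : EuclideanSpace ℝ (Fin N)) : ℝ :=
  ∑ i, fderiv ℝ V x (EuclideanSpace.single i 1) i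

noncomputable def lap {N : ℕ} (f : EuclideanSpace ℝ (Fin N) → ℝ)
    (x : EuclideanSpace ℝ (Fin N)) : ℝ :=
  vdiv (fun y => gradient f y) x

lemma grad_contDiffAt {N : ℕ} {c : EuclideanSpace ℝ (Fin N) → ℝ} {x : EuclideanSpace ℝ (Fin N)}
    (h : ContDiffAt ℝ 2 c x) : ContDiffAt ℝ 1 (fun y => gradient c y) x := by
  have h1 : ContDiffAt ℝ 1 (fderiv ℝ c) x := h.fderiv_right (by norm_num)
  exact ((LinearIsometryEquiv.contDiff
    (toDual ℝ (EuclideanSpace ℝ (Fin N))).symm).contDiffAt).comp x h1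

lemma fderiv_apply_eq_inner_grad {N : ℕ} {c : EuclideanSpace ℝ (Fin N) → ℝ}
    {x v : EuclideanSpace ℝ (Fin N)} :
    fderiv ℝ c x v = @inner ℝ _ _ (gradient c x) v := by
  rw [gradient, toDual_symm_apply]

lemma key {N : ℕ} {c : EuclideanSpace ℝ (Fin N) → ℝ} {x : EuclideanSpace ℝ (Fin N)} {α : ℝ}
    (h : ContDiffAt ℝ 2 c x) (hpos : 0 < c x + α) :
    (0 < -vdiv (fun y => ((c y + α) ^ 2)⁻¹ • gradient c y) x ↔
      lap c x * (c x + α) < 2 * ‖gradient c x‖ ^ 2) := by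
  have hc1 : DifferentiableAt ℝ c x := h.differentiableAt (by norm_num)
  have hW : DifferentiableAt ℝ (fun y => gradient c y) x :=
    (grad_contDiffAt h).differentiableAt (by norm_num)
  set s : ℝ := c x + α with hs
  have hs0 : s ≠ 0 := ne_of_gt hpos
  -- scalar derivative of t ↦ ((t + α)^2)⁻¹ at c x
  have hh : HasDerivAt (fun t : ℝ => ((t + α) ^ 2)⁻¹)
      (-((2 : ℕ) * (c x + α) ^ (2 - 1) * 1) / ((c x + α) ^ 2) ^ 2) (c x) := by
    exact (((hasDerivAt_id (c x)).add_const α).pow 2).inv (pow_ne_zero 2 hpos.ne')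
  have hg : HasFDerivAt (fun y => ((c y + α) ^ 2)⁻¹)
      ((-((2 : ℕ) * (c x + α) ^ (2 - 1) * 1) / ((c x + α) ^ 2) ^ 2) • fderiv ℝ c x) x :=
    hh.comp_hasFDerivAt x hc1.hasFDerivAt
  set k : ℝ := -((2 : ℕ) * (c x + α) ^ (2 - 1) * 1) / ((c x + α) ^ 2) ^ 2 with hk
  have hV : HasFDerivAt (fun y => ((c y + α) ^ 2)⁻¹ • gradient c y)
      (((c x + α) ^ 2)⁻¹ • fderiv ℝ (fun y => gradient c y) x
        + (k • fderiv ℝ c x).smulRight (gradient c x)) x :=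
    hg.smul hW.hasFDerivAt
  have hvdiv : vdiv (fun y => ((c y + α) ^ 2)⁻¹ • gradient c y) x
      = (s ^ 2)⁻¹ * lap c x + k * ‖gradient c x‖ ^ 2 := by
    rw [vdiv, hV.fderiv]
    simp only [ContinuousLinearMap.add_apply, ContinuousLinearMap.smul_apply,
      ContinuousLinearMap.smulRight_apply, ContinuousLinearMap.coe_smul', Pi.smul_apply,
      PiLp.add_apply, PiLp.smul_apply, smul_eq_mul]
    rw [Finset.sum_add_distrib]
    have h1 : ∑ i, (s ^ 2)⁻¹ * fderiv ℝ (fun y => gradient c y) x (EuclideanSpace.single i 1) i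
        = (s ^ 2)⁻¹ * lap c x := by
      rw [lap, vdiv, Finset.mul_sum]
    have hgi : ∀ i : Fin N, fderiv ℝ c x (EuclideanSpace.single i 1) = gradient c x i := by
      intro i
      rw [fderiv_apply_eq_inner_grad, EuclideanSpace.inner_single_right]
      simp
    have h2 : ∑ i, k * fderiv ℝ c x (EuclideanSpace.single i 1) * gradient c x i
        = k * ‖gradient c x‖ ^ 2 := by
      simp_rw [hgi, mul_assoc, ← Finset.mul_sum]
      congr 1
      have := @real_inner_self_eq_norm_sq (EuclideanSpace ℝ (Fin N)) _ _ (gradient c x)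
      rw [← this, PiLp.inner_apply]
      simp [RCLike.inner_apply]
      simp only [sq]
    rw [h1, h2]
  rw [hvdiv]
  have h3 : (s ^ 2)⁻¹ * lap c x + k * ‖gradient c x‖ ^ 2
      = (lap c x * s - 2 * ‖gradient c x‖ ^ 2) / s ^ 3 := by
    rw [hk, ← hs]
    field_simp
    ring
  rw [h3]
  rw [neg_div']
  rw [lt_div_iff₀ (by positivity : (0:ℝ) < s ^ 3)]
  constructor
  · intro hlt; nlinarith
  · intro hlt; nlinarith

lemma lap_continuousAt {N : ℕ} {c : EuclideanSpace ℝ (Fin N) → ℝ} {x : EuclideanSpace ℝ (Fin N)}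
    (h : ContDiffAt ℝ 2 c x) : ContinuousAt (lap c) x := by
  have h1 : ContDiffAt ℝ 0 (fderiv ℝ (fun y => gradient c y)) x :=
    (grad_contDiffAt h).fderiv_right (by norm_num)
  rw [contDiffAt_zero] at h1
  obtain ⟨u, hu, hcont⟩ := h1
  have hca : ContinuousAt (fderiv ℝ (fun y => gradient c y)) x := hcont.continuousAt hu
  have : ContinuousAt (fun y => ∑ i,
      fderiv ℝ (fun y => gradient c y) y (EuclideanSpace.single i 1) i) x := by
    apply tendsto_finset_sum
    intro i _
    exact ((PiLp.proj (𝕜 := ℝ) 2 _ i).continuous.comp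
      (ContinuousLinearMap.apply ℝ (EuclideanSpace ℝ (Fin N))
        (EuclideanSpace.single i 1)).continuous).continuousAt.comp hca
  exact this

/-- The set 𝒜 is nonempty iff Δc < 2|∇c|²/c on some open subset. -/
theorem A_nonempty_iff {N : ℕ} (Ω : Set (EuclideanSpace ℝ (Fin N))) (hΩ : IsOpen Ω)
    (hne : Ω.Nonempty) (c : EuclideanSpace ℝ (Fin N) → ℝ) (hc : ContDiffOn ℝ 2 c Ω)
    (hcpos : ∀ x ∈ Ω, 0 < c x) :
    (∃ α : ℝ, 0 < α ∧ ∃ Ω₀ : Set (EuclideanSpace ℝ (Fin N)), IsOpen Ω₀ ∧ Ω₀ ⊆ Ω ∧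
        Ω₀.Nonempty ∧ ∀ x ∈ Ω₀, 0 < -vdiv (fun y => ((c y + α) ^ 2)⁻¹ • gradient c y) x) ↔
      (∃ Ω' : Set (EuclideanSpace ℝ (Fin N)), IsOpen Ω' ∧ Ω' ⊆ Ω ∧ Ω'.Nonempty ∧
        ∀ x ∈ Ω', lap c x < 2 * ‖gradient c x‖ ^ 2 / c x) := by
  constructor
  · rintro ⟨α, hα, Ω₀, hopen, hsub, hneq, hA⟩
    refine ⟨Ω₀, hopen, hsub, hneq, fun x hx => ?_⟩
    have hxΩ := hsub hx
    have hc2 : ContDiffAt ℝ 2 c x := hc.contDiffAt (hΩ.mem_nhds hxΩ)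
    have hcx := hcpos x hxΩ
    have hpos : 0 < c x + α := by linarith
    have hkey := (key hc2 hpos).mp (hA x hx)
    rw [lt_div_iff₀ hcx]
    nlinarith [sq_nonneg ‖gradient c x‖, mul_pos hα hcx]
  · rintro ⟨Ω', hopen', hsub', ⟨x₀, hx₀⟩, hB⟩
    have hx₀Ω := hsub' hx₀
    have hc2 : ContDiffAt ℝ 2 c x₀ := hc.contDiffAt (hΩ.mem_nhds hx₀Ω)
    have hc₀ := hcpos x₀ hx₀Ω
    set L := lap c x₀ with hL
    set G := ‖gradient c x₀‖ ^ 2 with hG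
    have hG0 : 0 ≤ G := by positivity
    have hLb : L * c x₀ < 2 * G := by
      have h := hB x₀ hx₀
      rw [lt_div_iff₀ hc₀] at h
      exact h
    set D := 2 * G - L * c x₀ with hD
    have hD0 : 0 < D := by linarith
    have habs : (0:ℝ) ≤ |L| := abs_nonneg L
    set α := D / (2 * (|L| + 1)) with hα'
    have hα : 0 < α := by positivity
    have hαval : α * (|L| + 1) = D / 2 := by
      rw [hα']; field_simp
    have hstrict : L * (c x₀ + α) < 2 * G := by
      have h1 : L * α ≤ |L| * α := mul_le_mul_of_nonneg_right (le_abs_self L) hα.le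
      nlinarith
    have hFc : ContinuousAt (fun y => 2 * ‖gradient c y‖ ^ 2 - lap c y * (c y + α)) x₀ := by
      have h1 := (grad_contDiffAt hc2).continuousAt
      have h2 := lap_continuousAt hc2
      have h3 : ContinuousAt c x₀ := hc2.continuousAt
      exact (continuousAt_const.mul ((h1.norm).pow 2)).sub
        (h2.mul (h3.add continuousAt_const))
    have hF0 : 0 < 2 * ‖gradient c x₀‖ ^ 2 - lap c x₀ * (c x₀ + α) := by
      rw [← hG, ← hL]; linarith
    have hmem : ((fun y => 2 * ‖gradient c y‖ ^ 2 - lap c y * (c y + α)) ⁻¹' Ioi 0) ∩ Ω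
        ∈ nhds x₀ :=
      Filter.inter_mem (hFc.preimage_mem_nhds (Ioi_mem_nhds hF0)) (hΩ.mem_nhds hx₀Ω)
    obtain ⟨t, hts, htopen, hxt⟩ := mem_nhds_iff.mp hmem
    refine ⟨α, hα, t, htopen, fun y hy => (hts hy).2, ⟨x₀, hxt⟩, fun x hx => ?_⟩
    obtain ⟨hFx, hxΩ⟩ := hts hx
    have hc2x : ContDiffAt ℝ 2 c x := hc.contDiffAt (hΩ.mem_nhds hxΩ)
    have hposx : 0 < c x + α := by have := hcpos x hxΩ; linarith
    refine (key hc2x hposx).mpr ?_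
    have : 0 < 2 * ‖gradient c x‖ ^ 2 - lap c x * (c x + α) := hFx
    linarith
end

section
/- Let e solve Δe = 1 in Ω with e = 0 on ∂Ω, and set c = δe + 1 where 0 < δ ≤ min(1/(4‖∇e‖_∞²), 1/(2‖e‖_∞)). Then c > 0 in Ω̄ and Δc ≥ 2|∇c|²/c holds pointwise in Ω. -/
open MeasureTheory Real Set

lemma grad_affine {N : ℕ} (e : EuclideanSpace ℝ (Fin N) → ℝ) (δ : ℝ)
    (x : EuclideanSpace ℝ (Fin N)) (hd : DifferentiableAt ℝ e x) :
    gradient (fun y => δ * e y + 1) x = δ • gradient e x := by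
  unfold gradient
  rw [fderiv_add_const, fderiv_const_mul hd, _root_.map_smul]

/-- Remark 3.2: with Δe = 1, e = 0 on ∂Ω, and c = δe + 1 for δ small enough,
c is positive and satisfies Δc ≥ 2|∇c|²/c in Ω. -/
theorem example_A_empty {N : ℕ} (Ω : Set (EuclideanSpace ℝ (Fin N))) (hΩ : IsOpen Ω)
    (hΩb : Bornology.IsBounded Ω) (e : EuclideanSpace ℝ (Fin N) → ℝ)
    (he : ContDiffOn ℝ 2 e (closure Ω)) (hlap : ∀ x ∈ Ω, lap e x = 1)
    (hbd : ∀ x ∈ frontier Ω, e x = 0)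
    (Ge Me : ℝ) (hGe : 0 < Ge) (hMe : 0 < Me)
    (hGe' : ∀ x ∈ closure Ω, ‖gradient e x‖ ≤ Ge)
    (hMe' : ∀ x ∈ closure Ω, |e x| ≤ Me)
    (δ : ℝ) (hδ : 0 < δ) (hδ1 : δ ≤ 1 / (4 * Ge ^ 2)) (hδ2 : δ ≤ 1 / (2 * Me)) :
    (∀ x ∈ closure Ω, 0 < δ * e x + 1) ∧
      (∀ x ∈ Ω,
        2 * ‖gradient (fun y => δ * e y + 1) x‖ ^ 2 / (δ * e x + 1) ≤
          lap (fun y => δ * e y + 1) x) := by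
  have hpos : ∀ x ∈ closure Ω, 0 < δ * e x + 1 := by
    intro x hx
    have h1 := hMe' x hx
    have h2 : δ * Me ≤ 1 / 2 := by
      rw [le_div_iff₀ (by positivity)] at hδ2
      nlinarith
    have : |δ * e x| ≤ 1 / 2 := by
      rw [abs_mul, abs_of_pos hδ]
      nlinarith
    have := abs_le.1 this
    linarith [this.1]
  refine ⟨hpos, fun x hx => ?_⟩
  have hxc : x ∈ closure Ω := subset_closure hx
  have hnhds : closure Ω ∈ nhds x := Filter.mem_of_superset (hΩ.mem_nhds hx) subset_closure
  have hca : ContDiffAt ℝ 2 e x := he.contDiffAt hnhds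
  -- differentiability of gradient e at x
  have hfd : DifferentiableAt ℝ (fderiv ℝ e) x := by
    have := hca.fderiv_right (m := 1) (by norm_num)
    exact this.differentiableAt one_ne_zero
  have hge : DifferentiableAt ℝ (fun y => gradient e y) x := by
    have : (fun y => gradient e y) =
        fun y => (InnerProductSpace.toDual ℝ (EuclideanSpace ℝ (Fin N))).symm (fderiv ℝ e y) := rfl
    rw [this]
    exact ((InnerProductSpace.toDual ℝ (EuclideanSpace ℝ (Fin N))).symm.differentiable.differentiableAt).comp x hfd
  -- gradient of c equals δ • gradient e eventually near x
  have hev : (fun y => gradient (fun z => δ * e z + 1) y) =ᶠ[nhds x]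
      (fun y => δ • gradient e y) := by
    filter_upwards [hΩ.mem_nhds hx] with y hy
    exact grad_affine e δ y ((he.contDiffAt (Filter.mem_of_superset (hΩ.mem_nhds hy)
      subset_closure)).differentiableAt (by norm_num))
  have hde : DifferentiableAt ℝ e x := hca.differentiableAt (by norm_num)
  -- compute lap
  have hlapc : lap (fun y => δ * e y + 1) x = δ := by
    unfold lap vdiv
    rw [hev.fderiv_eq]
    have : fderiv ℝ (fun y => δ • gradient e y) x = δ • fderiv ℝ (fun y => gradient e y) x :=
      fderiv_const_smul hge δ
    rw [this]
    simp only [ContinuousLinearMap.smul_apply, PiLp.smul_apply, smul_eq_mul]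
    rw [← Finset.mul_sum]
    have := hlap x hx
    unfold lap vdiv at this
    rw [this, mul_one]
  rw [hlapc, grad_affine e δ x hde]
  have hnorm : ‖δ • gradient e x‖ = δ * ‖gradient e x‖ := by
    rw [norm_smul, Real.norm_eq_abs, abs_of_pos hδ]
  rw [hnorm]
  have hG := hGe' x hxc
  have hGnn : (0:ℝ) ≤ ‖gradient e x‖ := norm_nonneg _
  have hden := hpos x hxc
  rw [div_le_iff₀ hden]
  rw [le_div_iff₀ (by positivity)] at hδ1
  have hme := abs_le.1 (hMe' x hxc)
  rw [le_div_iff₀ (by positivity)] at hδ2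
  have h1 : δ * ‖gradient e x‖ ≤ δ * Ge := by nlinarith
  have h2 : (δ * ‖gradient e x‖)^2 ≤ (δ * Ge)^2 := by
    apply pow_le_pow_left₀ (by positivity) h1
  have h3 : 2 * (δ * Ge)^2 ≤ δ / 2 := by nlinarith
  have h4 : δ / 2 ≤ δ * (δ * e x + 1) := by nlinarith [mul_le_mul_of_nonneg_left hme.1 (le_of_lt hδ)]
  linarith
end

section
/- Suppose λ_α satisfies λ_α = (∫_Ω |∇u|²/(c+α) dx) / (∫_Ω u²·(-div(∇c/(c+α)²)) dx) for a positive eigenfunction u with ∫_Ω|∇u|² = α and the denominator positive. Then λ_α ≥ √λ₁ (c_L+α)² / (2‖∇c‖_∞ (c_M+α)). -/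
open MeasureTheory Real Set

lemma inner_gradient_eq' {F : Type*} [NormedAddCommGroup F] [InnerProductSpace ℝ F]
    [CompleteSpace F] (f : F → ℝ) (x v : F) :
    (inner ℝ (gradient f x) v : ℝ) = fderiv ℝ f x v := by
  unfold gradient
  rw [InnerProductSpace.toDual_symm_apply]

lemma sum_single_apply_mul {m : ℕ} (T : EuclideanSpace ℝ (Fin m) →L[ℝ] ℝ)
    (w : EuclideanSpace ℝ (Fin m)) :
    ∑ i, T (EuclideanSpace.single i 1) * w i = T w := by
  classical
  conv_rhs => rw [← (EuclideanSpace.basisFun (Fin m) ℝ).sum_repr w]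
  rw [map_sum]
  apply Finset.sum_congr rfl
  intro i _
  rw [EuclideanSpace.basisFun_repr, EuclideanSpace.basisFun_apply, ContinuousLinearMap.map_smul]
  simp [mul_comm]

lemma euc_abs_coord_le_norm {m : ℕ} (z : EuclideanSpace ℝ (Fin m)) (i : Fin m) :
    |z i| ≤ ‖z‖ := by
  rw [EuclideanSpace.norm_eq]
  have h1 : |z i| = Real.sqrt (‖z i‖ ^ 2) := by
    rw [Real.sqrt_sq_eq_abs]; simp [abs_abs]
  rw [h1]
  apply Real.sqrt_le_sqrt
  exact Finset.single_le_sum (f := fun j => ‖z j‖ ^ 2) (fun j _ => by positivity) (Finset.mem_univ i)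

lemma divergence_integral_zero {n : ℕ} (Ω : Set (EuclideanSpace ℝ (Fin (n+1))))
    (hΩm : MeasurableSet Ω) (hΩb : Bornology.IsBounded Ω)
    (G : EuclideanSpace ℝ (Fin (n+1)) → EuclideanSpace ℝ (Fin (n+1)))
    (G' : EuclideanSpace ℝ (Fin (n+1)) → (EuclideanSpace ℝ (Fin (n+1)) →L[ℝ] EuclideanSpace ℝ (Fin (n+1))))
    (hG0 : ∀ x ∉ Ω, G x = 0)
    (hG'0 : ∀ x ∉ Ω, G' x = 0)
    (hd : ∀ x, HasFDerivAt G (G' x) x)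
    (hi : IntegrableOn (fun x => ∑ i, G' x (EuclideanSpace.single i 1) i) Ω) :
    ∫ x in Ω, ∑ i, G' x (EuclideanSpace.single i 1) i = 0 := by
  classical
  obtain ⟨r, hr⟩ := hΩb.subset_closedBall (0 : EuclideanSpace ℝ (Fin (n+1)))
  set R : ℝ := max r 0 with hRdef
  have hΩR : ∀ y ∈ Ω, ‖y‖ ≤ R := by
    intro y hy
    have := hr hy
    simp only [Metric.mem_closedBall, dist_zero_right] at this
    exact this.trans (le_max_left _ _)
  set eE : EuclideanSpace ℝ (Fin (n+1)) ≃L[ℝ] (Fin (n+1) → ℝ) :=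
    EuclideanSpace.equiv (Fin (n+1)) ℝ with heE
  set a : Fin (n+1) → ℝ := fun _ => -(R+1) with ha
  set b : Fin (n+1) → ℝ := fun _ => (R+1) with hb
  have hR0 : (0:ℝ) ≤ R := le_max_right _ _
  have hle : a ≤ b := fun i => by simp only [ha, hb]; linarith
  set f : (Fin (n+1) → ℝ) → (Fin (n+1) → ℝ) := fun x => eE (G (eE.symm x)) with hf
  set f' : (Fin (n+1) → ℝ) → ((Fin (n+1) → ℝ) →L[ℝ] (Fin (n+1) → ℝ)) :=
    fun x => ((eE : EuclideanSpace ℝ (Fin (n+1)) →L[ℝ] (Fin (n+1) → ℝ)).comp ((G' (eE.symm x)).comp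
      (eE.symm : (Fin (n+1) → ℝ) →L[ℝ] EuclideanSpace ℝ (Fin (n+1))))) with hf'
  have hdf : ∀ x, HasFDerivAt f (f' x) x := by
    intro x
    have := (eE.hasFDerivAt.comp _ ((hd (eE.symm x)).comp x eE.symm.hasFDerivAt))
    simpa [Function.comp_def] using this
  have happ : ∀ (v : EuclideanSpace ℝ (Fin (n+1))) (i : Fin (n+1)), eE v i = v i := fun _ _ => rfl
  set D : EuclideanSpace ℝ (Fin (n+1)) → ℝ :=
    fun x => ∑ i, G' x (EuclideanSpace.single i 1) i with hD
  have hdivf : ∀ x, (∑ i, f' x (Pi.single i 1) i) = D (eE.symm x) := by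
    intro x
    simp only [hf', ContinuousLinearMap.comp_apply, hD]
    rfl
  have hD0 : ∀ x, x ∉ Ω → D x = 0 := by
    intro x hx
    simp [hD, hG'0 x hx]
  have hDind : D = Ω.indicator D := by
    funext x
    by_cases hx : x ∈ Ω
    · rw [Set.indicator_of_mem hx]
    · rw [Set.indicator_of_notMem hx, hD0 x hx]
  set φ := (MeasurableEquiv.toLp 2 (Fin (n+1) → ℝ)).symm with hφ
  have hvol : MeasurePreserving (φ.symm) :=
    (EuclideanSpace.volume_preserving_symm_measurableEquiv_toLp (Fin (n+1))).symm
  have hemb : MeasurableEmbedding (φ.symm : (Fin (n+1) → ℝ) → EuclideanSpace ℝ (Fin (n+1))) :=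
    φ.symm.measurableEmbedding
  set S : Set (EuclideanSpace ℝ (Fin (n+1))) := {y | eE y ∈ Icc a b} with hS
  have hpre : (φ.symm : (Fin (n+1) → ℝ) → EuclideanSpace ℝ (Fin (n+1))) ⁻¹' S = Icc a b := by
    ext x; simp only [Set.mem_preimage, hS, Set.mem_setOf_eq]; rfl
  have hΩS : Ω ⊆ S := by
    intro y hy
    simp only [hS, Set.mem_setOf_eq, Set.mem_Icc]
    constructor
    · intro i
      have := (abs_le.mp ((euc_abs_coord_le_norm y i).trans (hΩR y hy))).1
      simp only [ha]; rw [happ]; linarith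
    · intro i
      have := (abs_le.mp ((euc_abs_coord_le_norm y i).trans (hΩR y hy))).2
      simp only [hb]; rw [happ]; linarith
  have hiD : Integrable (Ω.indicator D) := (integrable_indicator_iff hΩm).mpr hi
  have hi' : IntegrableOn (fun x => ∑ i, f' x (Pi.single i 1) i) (Icc a b) := by
    have h0 : IntegrableOn
        (D ∘ (φ.symm : (Fin (n+1) → ℝ) → EuclideanSpace ℝ (Fin (n+1))))
        ((φ.symm : (Fin (n+1) → ℝ) → EuclideanSpace ℝ (Fin (n+1))) ⁻¹' S) :=
      (hvol.integrableOn_comp_preimage hemb).mpr (by rw [hDind]; exact hiD.integrableOn)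
    rw [hpre] at h0
    have heq : (fun x => ∑ i, f' x (Pi.single i 1) i)
        = D ∘ (φ.symm : (Fin (n+1) → ℝ) → EuclideanSpace ℝ (Fin (n+1))) := by
      funext x; rw [hdivf]; rfl
    rw [heq]; exact h0
  have hcf : ContinuousOn f (Icc a b) :=
    (Differentiable.continuous (fun x => (hdf x).differentiableAt)).continuousOn
  have key := MeasureTheory.integral_divergence_of_hasFDerivAt_off_countable a b hle f f' ∅
    countable_empty hcf (fun x _ => hdf x) hi'
  have hfaces : ∀ (i : Fin (n+1)) (c : ℝ), |c| = R + 1 →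
      ∀ (x : Fin n → ℝ), f (i.insertNth c x) i = 0 := by
    intro i c hc x
    have hni : eE.symm (i.insertNth c x) ∉ Ω := by
      intro hmem
      have h1 : |(eE.symm (i.insertNth c x) : EuclideanSpace ℝ (Fin (n+1))) i| ≤ R :=
        (euc_abs_coord_le_norm _ i).trans (hΩR _ hmem)
      have h2 : Fin.insertNth (α := fun _ => ℝ) i c x i = c := by simp
      have h3 : (eE.symm (i.insertNth c x) : EuclideanSpace ℝ (Fin (n+1))) i
          = Fin.insertNth (α := fun _ => ℝ) i c x i := rfl
      rw [h3, h2, hc] at h1; linarith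
    show eE (G (eE.symm (i.insertNth c x))) i = 0
    rw [hG0 _ hni]
    rfl
  have hrhs : (∑ i : Fin (n+1),
      ((∫ (x : Fin n → ℝ) in Icc (a ∘ i.succAbove) (b ∘ i.succAbove), f (i.insertNth (b i) x) i) -
        ∫ (x : Fin n → ℝ) in Icc (a ∘ i.succAbove) (b ∘ i.succAbove), f (i.insertNth (a i) x) i)) = 0 := by
    apply Finset.sum_eq_zero
    intro i _
    have h1 : ∀ x : Fin n → ℝ, f (i.insertNth (b i) x) i = 0 :=
      hfaces i (b i) (by simp only [hb]; rw [abs_of_nonneg (by linarith)]) 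
    have h2 : ∀ x : Fin n → ℝ, f (i.insertNth (a i) x) i = 0 :=
      hfaces i (a i) (by simp only [ha]; rw [abs_of_nonpos (by linarith)]; ring)
    simp [h1, h2]
  rw [hrhs] at key
  have htrans : ∫ (x : Fin (n+1) → ℝ) in Icc a b, ∑ i, f' x (Pi.single i 1) i
      = ∫ y in S, D y := by
    rw [← hpre, ← hvol.setIntegral_preimage_emb hemb D S]
    apply setIntegral_congr_fun (by rw [hpre]; exact measurableSet_Icc)
    intro x _
    exact hdivf x
  rw [htrans] at key
  have hfin : ∫ y in S, D y = ∫ x in Ω, D x := by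
    conv_lhs => rw [hDind]
    rw [setIntegral_indicator hΩm, Set.inter_eq_right.mpr hΩS]
  rw [hfin] at key
  exact key

set_option maxHeartbeats 3000000 in
/-- Corollary 3.6: lower bound for the eigenvalue λ_α. -/
theorem eigenvalue_lower_bound {N : ℕ} (Ω : Set (EuclideanSpace ℝ (Fin N)))
    (hΩ : IsOpen Ω) (hΩb : Bornology.IsBounded Ω)
    (c : EuclideanSpace ℝ (Fin N) → ℝ) (hc : ContDiffOn ℝ 2 c (closure Ω))
    (cL cM Gc : ℝ) (hcL : 0 < cL) (hcLcM : cL ≤ cM)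
    (hcL' : ∀ x ∈ closure Ω, cL ≤ c x) (hcM : ∀ x ∈ closure Ω, c x ≤ cM)
    (hGc : ∀ x ∈ closure Ω, ‖gradient c x‖ ≤ Gc)
    (lam1 : ℝ) (hlam1 : 0 < lam1)
    (α : ℝ) (hα : 0 < α)
    (u : EuclideanSpace ℝ (Fin N) → ℝ) (hu : ContDiffOn ℝ 2 u (closure Ω))
    (hubd : ∀ x ∈ frontier Ω, u x = 0) (hupos : ∀ x ∈ Ω, 0 < u x)
    (hPoincare : lam1 * ∫ x in Ω, u x ^ 2 ≤ ∫ x in Ω, ‖gradient u x‖ ^ 2)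
    (hnorm : ∫ x in Ω, ‖gradient u x‖ ^ 2 = α)
    (hden : 0 < ∫ x in Ω, u x ^ 2 * (-vdiv (fun y => ((c y + α) ^ 2)⁻¹ • gradient c y) x))
    (lamα : ℝ)
    (hlamα : lamα = (∫ x in Ω, ‖gradient u x‖ ^ 2 / (c x + α)) /
      ∫ x in Ω, u x ^ 2 * (-vdiv (fun y => ((c y + α) ^ 2)⁻¹ • gradient c y) x)) :
    Real.sqrt lam1 * (cL + α) ^ 2 / (2 * Gc * (cM + α)) ≤ lamα := by
  obtain _ | n := N
  · exfalso
    have h0 : ∀ x : EuclideanSpace ℝ (Fin 0),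
        u x ^ 2 * (-vdiv (fun y => ((c y + α) ^ 2)⁻¹ • gradient c y) x) = 0 := by
      intro x
      have : vdiv (fun y => ((c y + α) ^ 2)⁻¹ • gradient c y) x = 0 := by
        simp [vdiv]
      rw [this]; ring
    rw [setIntegral_congr_fun hΩ.measurableSet (fun x _ => h0 x)] at hden
    simp at hden
  -- main case
  classical
  set V : EuclideanSpace ℝ (Fin (n+1)) → EuclideanSpace ℝ (Fin (n+1)) :=
    fun y => ((c y + α) ^ 2)⁻¹ • gradient c y with hV
  have hmeas : MeasurableSet Ω := hΩ.measurableSet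
  have hK : IsCompact (closure Ω) :=
    Metric.isCompact_of_isClosed_isBounded isClosed_closure hΩb.closure
  have hΩsub : Ω ⊆ closure Ω := subset_closure
  have hcLα : (0:ℝ) < cL + α := by linarith
  have hcMα : (0:ℝ) < cM + α := by linarith
  have hcα : ∀ x ∈ closure Ω, 0 < c x + α := fun x hx => by have := hcL' x hx; linarith
  have hvolfin : volume Ω < ⊤ :=
    lt_of_le_of_lt (measure_mono hΩsub) hK.measure_lt_top
  -- Gc is positive
  have hGc0 : 0 < Gc := by
    by_contra hcon
    push_neg at hcon
    have hgz : ∀ y ∈ closure Ω, gradient c y = 0 := by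
      intro y hy
      have := hGc y hy
      have : ‖gradient c y‖ ≤ 0 := this.trans hcon
      simpa using le_antisymm this (norm_nonneg _)
    have hV0 : ∀ x ∈ Ω, vdiv V x = 0 := by
      intro x hx
      have hev : V =ᶠ[nhds x] (fun _ => (0 : EuclideanSpace ℝ (Fin (n+1)))) := by
        filter_upwards [hΩ.mem_nhds hx] with y hy
        simp [hV, hgz y (hΩsub hy)]
      have : fderiv ℝ V x = 0 := by
        rw [hev.fderiv_eq]; exact fderiv_const_apply 0
      simp [vdiv, this]
    rw [setIntegral_congr_fun hmeas (fun x hx => by rw [hV0 x hx]; ring :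
      ∀ x ∈ Ω, u x ^ 2 * (-vdiv V x) = 0)] at hden
    simp at hden
  set M : ℝ := Gc / (cL + α) ^ 2 with hM
  have hM0 : 0 < M := div_pos hGc0 (by positivity)
  have hVbound : ∀ x ∈ closure Ω, ‖V x‖ ≤ M := by
    intro x hx
    rw [hV]
    rw [norm_smul]
    have h1 : (cL + α) ^ 2 ≤ (c x + α) ^ 2 := by
      apply pow_le_pow_left₀ (le_of_lt hcLα) _ 2
      have := hcL' x hx; linarith
    have h2 : 0 < (c x + α)^2 := by have := hcα x hx; positivity
    calc ‖((c x + α) ^ 2)⁻¹‖ * ‖gradient c x‖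
        = ((c x + α) ^ 2)⁻¹ * ‖gradient c x‖ := by
          rw [Real.norm_eq_abs, abs_of_pos (by positivity)]
      _ ≤ ((cL + α) ^ 2)⁻¹ * Gc := by
          apply mul_le_mul _ (hGc x hx) (norm_nonneg _) (by positivity)
          exact inv_anti₀ (by positivity) h1
      _ = M := by rw [hM]; ring
  -- continuity/differentiability package
  have hcont_u : ContinuousOn u (closure Ω) := hu.continuousOn
  obtain ⟨Cu, hCu⟩ := hK.exists_bound_of_continuousOn hcont_u
  have huΩ : ContDiffOn ℝ 2 u Ω := hu.mono hΩsub
  have hcΩ : ContDiffOn ℝ 2 c Ω := hc.mono hΩsub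
  have hu_diff : ∀ x ∈ Ω, DifferentiableAt ℝ u x := by
    intro x hx
    exact (((huΩ x hx).contDiffAt (hΩ.mem_nhds hx)).differentiableAt (by norm_num))
  have hDu_cont : ContinuousOn (fderiv ℝ u) Ω :=
    huΩ.continuousOn_fderiv_of_isOpen hΩ (by norm_num)
  have hgradu_cont : ContinuousOn (fun x => gradient u x) Ω := by
    have : ContinuousOn (fun x => (InnerProductSpace.toDual ℝ
        (EuclideanSpace ℝ (Fin (n+1)))).symm (fderiv ℝ u x)) Ω :=
      (InnerProductSpace.toDual ℝ _).symm.continuous.comp_continuousOn hDu_cont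
    exact this
  have hV_contdiff : ContDiffOn ℝ 1 V Ω := by
    have h1 : ContDiffOn ℝ 1 (fderiv ℝ c) Ω := hcΩ.fderiv_of_isOpen hΩ (by norm_num)
    have hgrad : ContDiffOn ℝ 1 (fun y => gradient c y) Ω := by
      have := ((InnerProductSpace.toDual ℝ
        (EuclideanSpace ℝ (Fin (n+1)))).symm : _ ≃ₗᵢ[ℝ] _).toContinuousLinearEquiv.contDiff.comp_contDiffOn h1
      exact this
    have hsc : ContDiffOn ℝ 1 (fun y => ((c y + α) ^ 2)⁻¹) Ω := by
      apply ContDiffOn.inv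
      · exact ((hcΩ.of_le (by norm_num)).add contDiffOn_const).pow 2
      · intro x hx
        have := hcα x (hΩsub hx); positivity
    exact hsc.smul hgrad
  have hV_cont : ContinuousOn V Ω := hV_contdiff.continuousOn
  have hV_diff : ∀ x ∈ Ω, DifferentiableAt ℝ V x := by
    intro x hx
    exact ((hV_contdiff x hx).contDiffAt (hΩ.mem_nhds hx)).differentiableAt one_ne_zero
  -- integrability basics
  have hu2_int : IntegrableOn (fun x => u x ^ 2) Ω :=
    ((hcont_u.pow 2).integrableOn_compact hK).mono_set hΩsub
  have hgr2_int : IntegrableOn (fun x => ‖gradient u x‖ ^ 2) Ω := by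
    by_contra h
    rw [integral_undef h] at hnorm
    linarith
  have hden_int : IntegrableOn (fun x => u x ^ 2 * (-vdiv V x)) Ω := by
    by_contra h
    rw [integral_undef h] at hden
    linarith
  have hgr_int : IntegrableOn (fun x => ‖gradient u x‖) Ω := by
    apply Integrable.mono'
      (((integrableOn_const hvolfin.ne :
          IntegrableOn (fun _ => (1:ℝ)) Ω volume)).add hgr2_int)
      ((hgradu_cont.norm).aestronglyMeasurable hmeas)
    · filter_upwards with x
      simp only [Pi.add_apply]
      have h := norm_nonneg (gradient u x)
      rw [Real.norm_eq_abs, abs_of_nonneg h]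
      nlinarith [sq_nonneg (‖gradient u x‖ - 1)]
  have hprod_int : IntegrableOn (fun x => u x * ‖gradient u x‖) Ω := by
    apply Integrable.mono' (((hu2_int.add hgr2_int)).const_mul (1/2 : ℝ))
      (((hcont_u.mono hΩsub).mul hgradu_cont.norm).aestronglyMeasurable hmeas)
    · filter_upwards with x
      simp only [Pi.add_apply]
      rw [Real.norm_eq_abs, Pi.mul_apply, abs_mul]
      have h1 := abs_nonneg (u x)
      have h2 : |‖gradient u x‖| = ‖gradient u x‖ := abs_of_nonneg (norm_nonneg _)
      rw [h2]
      nlinarith [sq_nonneg (|u x| - ‖gradient u x‖), sq_abs (u x)]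
  -- the first-order part of the divergence
  set Φ : EuclideanSpace ℝ (Fin (n+1)) → ℝ :=
    fun x => 2 * u x * (fderiv ℝ u x (V x)) with hΦ
  have hΦ_cont : ContinuousOn Φ Ω := by
    apply ContinuousOn.mul
    · exact continuousOn_const.mul (hcont_u.mono hΩsub)
    · exact hDu_cont.clm_apply hV_cont
  have hΦ_ptbound : ∀ x ∈ Ω, |fderiv ℝ u x (V x)| ≤ ‖gradient u x‖ * M := by
    intro x hx
    rw [← inner_gradient_eq' u x (V x)]
    calc |(inner ℝ (gradient u x) (V x) : ℝ)| ≤ ‖gradient u x‖ * ‖V x‖ :=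
          abs_real_inner_le_norm _ _
      _ ≤ ‖gradient u x‖ * M :=
          mul_le_mul_of_nonneg_left (hVbound x (hΩsub hx)) (norm_nonneg _)
  have hΦ_int : IntegrableOn Φ Ω := by
    apply Integrable.mono' (hprod_int.const_mul (2*M)) (hΦ_cont.aestronglyMeasurable hmeas)
    filter_upwards [ae_restrict_mem hmeas] with x hx
    have h1 := hΦ_ptbound x hx
    have hu0 := (hupos x hx).le
    have hg0 := norm_nonneg (gradient u x)
    simp only [hΦ, Real.norm_eq_abs]
    rw [abs_mul, abs_of_nonneg (by linarith : (0:ℝ) ≤ 2 * u x)]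
    nlinarith [abs_nonneg (fderiv ℝ u x (V x))]
  -- the vector field and its derivative
  set W : EuclideanSpace ℝ (Fin (n+1)) → EuclideanSpace ℝ (Fin (n+1)) :=
    fun y => u y ^ 2 • V y with hW
  set W' : EuclideanSpace ℝ (Fin (n+1)) →
      (EuclideanSpace ℝ (Fin (n+1)) →L[ℝ] EuclideanSpace ℝ (Fin (n+1))) :=
    fun x => u x ^ 2 • fderiv ℝ V x
      + (fderiv ℝ (fun y => u y ^ 2) x).smulRight (V x) with hW'
  have hu2_diff : ∀ x ∈ Ω, DifferentiableAt ℝ (fun y => u y ^ 2) x :=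
    fun x hx => (hu_diff x hx).pow 2
  have hWd : ∀ x ∈ Ω, HasFDerivAt W (W' x) x := by
    intro x hx
    exact ((hu2_diff x hx).hasFDerivAt).smul ((hV_diff x hx).hasFDerivAt)
  set G : EuclideanSpace ℝ (Fin (n+1)) → EuclideanSpace ℝ (Fin (n+1)) := Ω.indicator W with hG
  set G' : EuclideanSpace ℝ (Fin (n+1)) →
      (EuclideanSpace ℝ (Fin (n+1)) →L[ℝ] EuclideanSpace ℝ (Fin (n+1))) :=
    Ω.indicator W' with hG'
  have hG0 : ∀ x ∉ Ω, G x = 0 := fun x hx => Set.indicator_of_notMem hx W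
  have hG'0 : ∀ x ∉ Ω, G' x = 0 := fun x hx => Set.indicator_of_notMem hx W'
  have hGd : ∀ x, HasFDerivAt G (G' x) x := by
    intro x
    by_cases hx : x ∈ Ω
    · rw [hG', Set.indicator_of_mem hx]
      apply (hWd x hx).congr_of_eventuallyEq
      filter_upwards [hΩ.mem_nhds hx] with y hy
      exact Set.indicator_of_mem hy W
    by_cases hxc : x ∈ closure Ω
    · -- boundary case
      have hxf : x ∈ frontier Ω := by
        rw [hΩ.frontier_eq]; exact ⟨hxc, hx⟩
      have hux : u x = 0 := hubd x hxf
      have hdw : DifferentiableWithinAt ℝ u (closure Ω) x :=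
        (hu x hxc).differentiableWithinAt (by norm_num)
      set L := fderivWithin ℝ u (closure Ω) x with hL
      have hlo := hdw.hasFDerivWithinAt.isLittleO
      have h1 : ∀ᶠ y in nhds x, y ∈ closure Ω → |u y| ≤ (1 + ‖L‖) * ‖y - x‖ := by
        have h2 := hlo.def zero_lt_one
        rw [eventually_nhdsWithin_iff] at h2
        filter_upwards [h2] with y hy hyc
        have h3 := hy hyc
        rw [hux] at h3
        simp only [sub_zero, Real.norm_eq_abs, one_mul] at h3
        have h4 : |u y| ≤ |u y - L (y - x)| + |L (y - x)| := by
          have := abs_sub_abs_le_abs_sub (u y) (L (y - x))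
          have := abs_add_le (u y - L (y - x)) (L (y - x))
          calc |u y| = |(u y - L (y - x)) + L (y - x)| := by ring_nf
            _ ≤ |u y - L (y - x)| + |L (y - x)| := abs_add_le _ _
        have h5 : |L (y - x)| ≤ ‖L‖ * ‖y - x‖ := L.le_opNorm (y - x)
        have h6 : ‖y - x‖ = |‖y - x‖| := (abs_of_nonneg (norm_nonneg _)).symm
        calc |u y| ≤ |u y - L (y - x)| + |L (y - x)| := h4
          _ ≤ ‖y - x‖ + ‖L‖ * ‖y - x‖ := by
              apply add_le_add _ h5
              simpa [Real.norm_eq_abs] using h3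
          _ = (1 + ‖L‖) * ‖y - x‖ := by ring
      set CC : ℝ := (1 + ‖L‖) ^ 2 * M with hCC
      have hCC0 : 0 ≤ CC := by positivity
      have hquad : ∀ᶠ y in nhds x, ‖G y‖ ≤ CC * ‖y - x‖ ^ 2 := by
        filter_upwards [h1] with y hy
        by_cases hyΩ : y ∈ Ω
        · rw [hG, Set.indicator_of_mem hyΩ]
          have h7 : ‖(u y ^ 2 : ℝ) • V y‖ = u y ^ 2 * ‖V y‖ := by
            rw [norm_smul, Real.norm_eq_abs, abs_of_nonneg (sq_nonneg _)]
          rw [hW, h7]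
          have h8 := hy (hΩsub hyΩ)
          have h9 : u y ^ 2 ≤ ((1 + ‖L‖) * ‖y - x‖) ^ 2 := by
            rw [← sq_abs (u y)]
            apply pow_le_pow_left₀ (abs_nonneg _) h8
          have h10 := hVbound y (hΩsub hyΩ)
          have h11 : (0:ℝ) ≤ u y ^ 2 := sq_nonneg _
          calc u y ^ 2 * ‖V y‖ ≤ ((1 + ‖L‖) * ‖y - x‖) ^ 2 * M := by
                apply mul_le_mul h9 h10 (norm_nonneg _) (by positivity)
            _ = CC * ‖y - x‖ ^ 2 := by rw [hCC]; ring
        · rw [hG, Set.indicator_of_notMem hyΩ]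
          simp only [norm_zero]
          positivity
      rw [hG', Set.indicator_of_notMem hx]
      have hGx : G x = 0 := hG0 x hx
      apply HasFDerivAt.of_isLittleO
      rw [Asymptotics.isLittleO_iff]
      intro ε hε
      have hball : ∀ᶠ y in nhds x, ‖y - x‖ < ε / (CC + 1) := by
        have : Metric.ball x (ε / (CC + 1)) ∈ nhds x :=
          Metric.ball_mem_nhds x (by positivity)
        filter_upwards [this] with y hy
        rwa [Metric.mem_ball, dist_eq_norm] at hy
      filter_upwards [hquad, hball] with y hy1 hy2
      rw [hGx]
      simp only [ContinuousLinearMap.zero_apply, sub_zero]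
      have hn0 : (0:ℝ) ≤ ‖y - x‖ := norm_nonneg _
      calc ‖G y‖ ≤ CC * ‖y - x‖ ^ 2 := hy1
        _ = (CC * ‖y - x‖) * ‖y - x‖ := by ring
        _ ≤ ε * ‖y - x‖ := by
            apply mul_le_mul_of_nonneg_right _ hn0
            have h12 : CC * ‖y - x‖ ≤ CC * (ε / (CC + 1)) :=
              mul_le_mul_of_nonneg_left hy2.le hCC0
            have h13 : CC * (ε / (CC + 1)) ≤ ε := by
              rw [div_eq_inv_mul]
              have : CC / (CC + 1) ≤ 1 := by
                rw [div_le_one (by linarith)]; linarith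
              calc CC * ((CC + 1)⁻¹ * ε) = (CC / (CC + 1)) * ε := by ring
                _ ≤ 1 * ε := mul_le_mul_of_nonneg_right this hε.le
                _ = ε := one_mul ε
            linarith
        _ = ε * ‖y - x‖ := rfl
    · -- away from the closure
      have hop : IsOpen (closure Ω)ᶜ := isClosed_closure.isOpen_compl
      rw [hG', Set.indicator_of_notMem hx]
      apply (hasFDerivAt_const (0 : EuclideanSpace ℝ (Fin (n+1))) x).congr_of_eventuallyEq
      filter_upwards [hop.mem_nhds hxc] with y hy
      exact Set.indicator_of_notMem (fun hyΩ => hy (hΩsub hyΩ)) W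
  -- divergence identity on Ω
  have hfd2 : ∀ x ∈ Ω, fderiv ℝ (fun y => u y ^ 2) x = (2 * u x) • fderiv ℝ u x := by
    intro x hx
    have h1 := (hu_diff x hx).hasFDerivAt
    have h2 : HasFDerivAt (fun y => u y ^ 2)
        (u x • fderiv ℝ u x + u x • fderiv ℝ u x) x := by
      exact (h1.mul h1).congr_of_eventuallyEq (Filter.Eventually.of_forall fun y => by simp [pow_two])
    rw [h2.fderiv, two_mul, add_smul]
  have hdiv_eq : ∀ x ∈ Ω, (∑ i, G' x (EuclideanSpace.single i 1) i)
      = u x ^ 2 * vdiv V x + Φ x := by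
    intro x hx
    have hG'x : G' x = W' x := Set.indicator_of_mem hx W'
    rw [hG'x, hW']
    have hterm : ∀ i : Fin (n+1),
        (u x ^ 2 • fderiv ℝ V x + (fderiv ℝ (fun y => u y ^ 2) x).smulRight (V x))
          (EuclideanSpace.single i 1) i
        = u x ^ 2 * (fderiv ℝ V x (EuclideanSpace.single i 1) i)
          + (fderiv ℝ (fun y => u y ^ 2) x) (EuclideanSpace.single i 1) * (V x i) := by
      intro i
      simp only [ContinuousLinearMap.add_apply, ContinuousLinearMap.coe_smul',
        Pi.smul_apply, ContinuousLinearMap.smulRight_apply]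
      simp [PiLp.add_apply, PiLp.smul_apply, smul_eq_mul]
    rw [Finset.sum_congr rfl (fun i _ => hterm i)]
    rw [Finset.sum_add_distrib, ← Finset.mul_sum, sum_single_apply_mul]
    have hvd : vdiv V x = ∑ i, fderiv ℝ V x (EuclideanSpace.single i 1) i := rfl
    rw [hvd, hfd2 x hx]
    simp only [hΦ, ContinuousLinearMap.coe_smul', Pi.smul_apply, smul_eq_mul]
    try ring
  have hvd_int : IntegrableOn (fun x => u x ^ 2 * vdiv V x) Ω :=
    MeasureTheory.IntegrableOn.congr_fun (hden_int.neg)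
      (fun x _ => by simp [Pi.neg_apply, mul_neg, neg_neg]) hmeas
  have hsum_int : IntegrableOn (fun x => ∑ i, G' x (EuclideanSpace.single i 1) i) Ω :=
    MeasureTheory.IntegrableOn.congr_fun (hvd_int.add hΦ_int)
      (fun x hx => (hdiv_eq x hx).symm) hmeas
  have hkey := divergence_integral_zero Ω hmeas hΩb G G' hG0 hG'0 hGd hsum_int
  have hsplit : ∫ x in Ω, Φ x = ∫ x in Ω, u x ^ 2 * (-vdiv V x) := by
    have e1 : ∫ x in Ω, (∑ i, G' x (EuclideanSpace.single i 1) i)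
        = ∫ x in Ω, (u x ^ 2 * vdiv V x + Φ x) := setIntegral_congr_fun hmeas hdiv_eq
    rw [e1, integral_add hvd_int hΦ_int] at hkey
    have e2 : ∫ x in Ω, u x ^ 2 * vdiv V x = - ∫ x in Ω, u x ^ 2 * (-vdiv V x) := by
      rw [← integral_neg]
      apply setIntegral_congr_fun hmeas
      intro x _
      ring
    rw [e2] at hkey
    linarith
  -- Cauchy–Schwarz
  set A := ∫ x in Ω, u x ^ 2 with hA
  have hA0 : 0 ≤ A := setIntegral_nonneg hmeas (fun x _ => sq_nonneg _)
  have hAα : lam1 * A ≤ α := by rw [← hnorm]; exact hPoincare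
  have hCS : ∫ x in Ω, u x * ‖gradient u x‖ ≤ Real.sqrt A * Real.sqrt α := by
    rcases eq_or_lt_of_le hA0 with hAz | hApos
    · have hzero : (fun x => u x ^ 2) =ᵐ[volume.restrict Ω] 0 := by
        apply (integral_eq_zero_iff_of_nonneg_ae ?_ hu2_int).mp hAz.symm
        filter_upwards with x
        exact sq_nonneg _
      have hz2 : (fun x => u x * ‖gradient u x‖) =ᵐ[volume.restrict Ω] 0 := by
        filter_upwards [hzero] with x hx
        have : u x = 0 := by
          have := pow_eq_zero_iff (n := 2) (by norm_num) |>.mp hx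
          exact this
        simp [this]
      rw [integral_congr_ae hz2]
      simp
      positivity
    · set t := Real.sqrt α / Real.sqrt A with ht
      have hsA : 0 < Real.sqrt A := Real.sqrt_pos.mpr hApos
      have hsα : 0 < Real.sqrt α := Real.sqrt_pos.mpr hα
      have ht0 : 0 < t := div_pos hsα hsA
      have hpt : ∀ x ∈ Ω, u x * ‖gradient u x‖
          ≤ (t/2) * u x ^ 2 + (1/(2*t)) * ‖gradient u x‖ ^ 2 := by
        intro x hx
        have expand : (t/2) * u x ^ 2 + (1/(2*t)) * ‖gradient u x‖ ^ 2 - u x * ‖gradient u x‖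
            = (t * u x - ‖gradient u x‖) ^ 2 / (2*t) := by
          field_simp
          ring
        have hnn := div_nonneg (sq_nonneg (t * u x - ‖gradient u x‖))
          (by positivity : (0:ℝ) ≤ 2*t)
        linarith [expand, hnn]
      have hpt' : ∀ x ∈ Ω, u x * ‖gradient u x‖
          ≤ (t/2) * u x ^ 2 + (1/(2*t)) * ‖gradient u x‖ ^ 2 := hpt
      have h3 := setIntegral_mono_on hprod_int
        ((hu2_int.const_mul (t/2)).add (hgr2_int.const_mul (1/(2*t)))) hmeas hpt'
      simp only [Pi.add_apply] at h3
      rw [integral_add (hu2_int.const_mul (t/2)) (hgr2_int.const_mul (1/(2*t))),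
        integral_const_mul, integral_const_mul, hnorm, ← hA] at h3
      have heq : (t/2) * A + (1/(2*t)) * α = Real.sqrt A * Real.sqrt α := by
        have e1 : Real.sqrt A ^ 2 = A := Real.sq_sqrt hA0
        have e2 : Real.sqrt α ^ 2 = α := Real.sq_sqrt hα.le
        rw [ht]
        field_simp
        linear_combination (α - 2 * Real.sqrt α ^ 2) * e1 - A * e2
      rw [heq] at h3
      exact h3
  have hden_le : (∫ x in Ω, u x ^ 2 * (-vdiv V x)) ≤ 2 * M * (Real.sqrt A * Real.sqrt α) := by
    rw [← hsplit]
    have h4 : ∀ x ∈ Ω, Φ x ≤ 2 * M * (u x * ‖gradient u x‖) := by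
      intro x hx
      have h5 := hΦ_ptbound x hx
      have hu0 := (hupos x hx).le
      have h5' : fderiv ℝ u x (V x) ≤ ‖gradient u x‖ * M := (le_abs_self _).trans h5
      simp only [hΦ]
      nlinarith [norm_nonneg (gradient u x)]
    have h6 := setIntegral_mono_on hΦ_int (hprod_int.const_mul (2*M)) hmeas h4
    rw [integral_const_mul] at h6
    calc ∫ x in Ω, Φ x ≤ 2*M * ∫ x in Ω, u x * ‖gradient u x‖ := h6
      _ ≤ 2*M*(Real.sqrt A * Real.sqrt α) := by
          apply mul_le_mul_of_nonneg_left hCS (by positivity)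
  set s1 := Real.sqrt lam1 with hs1
  have hs10 : 0 < s1 := Real.sqrt_pos.mpr hlam1
  have hsα0 : 0 < Real.sqrt α := Real.sqrt_pos.mpr hα
  have hsq : Real.sqrt α * Real.sqrt α = α := Real.mul_self_sqrt hα.le
  have hsA_le : Real.sqrt A ≤ Real.sqrt α / s1 := by
    have h7 : A ≤ α / lam1 := by
      rw [le_div_iff₀ hlam1]
      linarith
    calc Real.sqrt A ≤ Real.sqrt (α / lam1) := Real.sqrt_le_sqrt h7
      _ = Real.sqrt α / s1 := by rw [hs1, Real.sqrt_div hα.le]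
  have hden_le2 : (∫ x in Ω, u x ^ 2 * (-vdiv V x)) ≤ 2 * M * α / s1 := by
    calc (∫ x in Ω, u x ^ 2 * (-vdiv V x)) ≤ 2*M*(Real.sqrt A * Real.sqrt α) := hden_le
      _ ≤ 2*M*((Real.sqrt α / s1) * Real.sqrt α) := by
          apply mul_le_mul_of_nonneg_left _ (by positivity)
          exact mul_le_mul_of_nonneg_right hsA_le (Real.sqrt_nonneg _)
      _ = 2*M*α/s1 := by
          rw [div_mul_eq_mul_div, hsq]
          ring
  -- numerator lower bound
  have hnum_int : IntegrableOn (fun x => ‖gradient u x‖ ^ 2 / (c x + α)) Ω := by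
    apply Integrable.mono' (hgr2_int.const_mul ((cL+α)⁻¹))
    · apply ContinuousOn.aestronglyMeasurable _ hmeas
      apply ContinuousOn.div (hgradu_cont.norm.pow 2)
        ((hc.continuousOn.mono hΩsub).add continuousOn_const)
        (fun x hx => ne_of_gt (hcα x (hΩsub hx)))
    · filter_upwards [ae_restrict_mem hmeas] with x hx
      have hpos := hcα x (hΩsub hx)
      rw [Real.norm_eq_abs, abs_of_nonneg (by positivity : (0:ℝ) ≤ ‖gradient u x‖^2 / (c x + α))]
      rw [inv_mul_eq_div]
      apply div_le_div_of_nonneg_left (sq_nonneg _) hcLα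
      have := hcL' x (hΩsub hx)
      linarith
  have hnum_ge : α / (cM + α) ≤ ∫ x in Ω, ‖gradient u x‖ ^ 2 / (c x + α) := by
    have h8 : ∀ x ∈ Ω, ‖gradient u x‖ ^ 2 / (cM+α) ≤ ‖gradient u x‖ ^ 2 / (c x + α) := by
      intro x hx
      apply div_le_div_of_nonneg_left (sq_nonneg _) (hcα x (hΩsub hx))
      have := hcM x (hΩsub hx)
      linarith
    have h9 := setIntegral_mono_on (hgr2_int.div_const _) hnum_int hmeas h8
    rw [integral_div, hnorm] at h9
    exact h9
  -- conclusion
  rw [hlamα]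
  have hnum0 : 0 < ∫ x in Ω, ‖gradient u x‖ ^ 2 / (c x + α) :=
    lt_of_lt_of_le (by positivity : (0:ℝ) < α/(cM+α)) hnum_ge
  have hDm0 : 0 < 2*M*α/s1 := by positivity
  have step1 : (∫ x in Ω, ‖gradient u x‖ ^ 2 / (c x + α)) / (2*M*α/s1)
      ≤ (∫ x in Ω, ‖gradient u x‖ ^ 2 / (c x + α)) / (∫ x in Ω, u x ^ 2 * (-vdiv V x)) :=
    div_le_div_of_nonneg_left hnum0.le hden hden_le2
  have step2 : (α/(cM+α)) / (2*M*α/s1)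
      ≤ (∫ x in Ω, ‖gradient u x‖ ^ 2 / (c x + α)) / (2*M*α/s1) := by
    gcongr
  have stepEq : s1 * (cL + α) ^ 2 / (2 * Gc * (cM + α)) = (α/(cM+α)) / (2*M*α/s1) := by
    rw [hM]
    field_simp
  rw [stepEq]
  exact step2.trans step1
end

section
/- Let a, b ∈ C²(Ω̄) be positive with c = a/b satisfying Δc ≥ 2|∇c|²/c in Ω. Then for every u ∈ C²(Ω̄) with u = 0 on ∂Ω, ∫_Ω b(x) u Δu / (a(x) + b(x)‖∇u‖₂²) dx ≤ 0. -/
open MeasureTheory Real Set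

namespace Aux

variable {N : ℕ}

local notation "E" => EuclideanSpace ℝ (Fin N)

lemma fderiv_apply_eq_inner (f : E → ℝ) (x v : E) :
    fderiv ℝ f x v = @inner ℝ _ _ (gradient f x) v :=
  (InnerProductSpace.toDual_symm_apply).symm

lemma sum_coord (L : (E) →L[ℝ] ℝ) (v : E) :
    ∑ i, L (EuclideanSpace.single i 1) * v i = L v := by
  have hv : v = ∑ i, (EuclideanSpace.basisFun (Fin N) ℝ).repr v i •
      (EuclideanSpace.basisFun (Fin N) ℝ) i :=
    ((EuclideanSpace.basisFun (Fin N) ℝ).sum_repr v).symm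
  conv_rhs => rw [hv]
  rw [map_sum]
  refine Finset.sum_congr rfl fun i _ => ?_
  rw [EuclideanSpace.basisFun_apply, EuclideanSpace.basisFun_repr, _root_.map_smul]
  simp [mul_comm]

lemma vdiv_congr_nhds {V W : E → E} {x : E} (h : V =ᶠ[nhds x] W) :
    vdiv V x = vdiv W x := by
  unfold vdiv
  rw [h.fderiv_eq]

lemma lap_congr_nhds {f g : E → ℝ} {x : E} (h : f =ᶠ[nhds x] g) :
    lap f x = lap g x :=
  vdiv_congr_nhds (h.gradient)

lemma vdiv_of_hasFDerivAt {V : E → E} {x : E} {L : E →L[ℝ] E}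
    (h : HasFDerivAt V L x) : vdiv V x = ∑ i, L (EuclideanSpace.single i 1) i := by
  unfold vdiv; rw [h.fderiv]

lemma vdiv_sub {V W : E → E} {x : E} (hV : DifferentiableAt ℝ V x)
    (hW : DifferentiableAt ℝ W x) :
    vdiv (fun y => V y - W y) x = vdiv V x - vdiv W x := by
  unfold vdiv
  rw [fderiv_fun_sub hV hW]
  simp [Finset.sum_sub_distrib]

lemma vdiv_smul {c : E → ℝ} {V : E → E} {x : E} {c' : E →L[ℝ] ℝ}
    (hc : HasFDerivAt c c' x) (hV : DifferentiableAt ℝ V x) :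
    vdiv (fun y => c y • V y) x = c' (V x) + c x * vdiv V x := by
  have h := hc.smul hV.hasFDerivAt
  rw [vdiv_of_hasFDerivAt (V := fun y => c y • V y) h]
  have : ∀ i : Fin N, ((c x • fderiv ℝ V x + c'.smulRight (V x))
      (EuclideanSpace.single i 1)) i
      = c x * (fderiv ℝ V x (EuclideanSpace.single i 1)) i
        + c' (EuclideanSpace.single i 1) * (V x) i := by
    intro i
    simp [ContinuousLinearMap.smulRight_apply, PiLp.add_apply, PiLp.smul_apply,
      smul_eq_mul]
  rw [Finset.sum_congr rfl fun i _ => this i, Finset.sum_add_distrib, ← Finset.mul_sum,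
    sum_coord]
  rw [vdiv]
  ring

lemma gradient_comp {φ : ℝ → ℝ} {f : E → ℝ} {x : E} {d : ℝ}
    (hφ : HasDerivAt φ d (f x)) (hf : DifferentiableAt ℝ f x) :
    gradient (fun y => φ (f y)) x = d • gradient f x := by
  have hcomp : HasFDerivAt (fun y => φ (f y)) (d • fderiv ℝ f x) x :=
    hφ.comp_hasFDerivAt x hf.hasFDerivAt
  rw [gradient, hcomp.fderiv, _root_.map_smul]
  rfl

lemma differentiableAt_gradient {f : E → ℝ} {x : E} (hf : ContDiffAt ℝ 2 f x) :
    DifferentiableAt ℝ (fun y => gradient f y) x := by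
  have h1 : ContDiffAt ℝ 1 (fderiv ℝ f) x := hf.fderiv_right (by norm_num)
  have h2 : DifferentiableAt ℝ (fderiv ℝ f) x := h1.differentiableAt one_ne_zero
  have := ((InnerProductSpace.toDual ℝ (E)).symm.toContinuousLinearEquiv
      : StrongDual ℝ (E) ≃L[ℝ] E).differentiableAt.comp x h2
  exact this

lemma contDiffAt_of_contDiffOn_closure {f : E → ℝ} {s : Set (E)} {x : E}
    (hs : IsOpen s) (hx : x ∈ s) (hf : ContDiffOn ℝ 2 f (closure s)) :
    ContDiffAt ℝ 2 f x :=
  hf.contDiffAt (Filter.mem_of_superset (hs.mem_nhds hx) subset_closure)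

lemma continuousOn_gradient {f : E → ℝ} {s : Set (E)} (hs : IsOpen s)
    (hf : ContDiffOn ℝ 2 f s) : ContinuousOn (fun y => gradient f y) s := by
  have h1 : ContinuousOn (fderiv ℝ f) s :=
    hf.continuousOn_fderiv_of_isOpen hs (by norm_num)
  exact ((InnerProductSpace.toDual ℝ (E)).symm.toContinuousLinearEquiv
      : StrongDual ℝ (E) ≃L[ℝ] E).continuous.comp_continuousOn h1

lemma continuousOn_lap {f : E → ℝ} {s : Set (E)} (hs : IsOpen s)
    (hf : ContDiffOn ℝ 2 f s) : ContinuousOn (lap f) s := by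
  have h1 : ContDiffOn ℝ 1 (fderiv ℝ f) s := hf.fderiv_of_isOpen hs (by norm_num)
  have h2 : ContDiffOn ℝ 1 (fun y => gradient f y) s := by
    have := h1.continuousLinearMap_comp
      ((InnerProductSpace.toDual ℝ (E)).symm.toContinuousLinearEquiv.toContinuousLinearMap)
    exact this
  have h3 : ContinuousOn (fderiv ℝ (fun y => gradient f y)) s :=
    h2.continuousOn_fderiv_of_isOpen hs le_rfl
  have : ContinuousOn (fun x => ∑ i, (fderiv ℝ (fun y => gradient f y) x
      (EuclideanSpace.single i 1)) i) s := by
    refine continuousOn_finset_sum _ fun i _ => ?_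
    have h4 : ContinuousOn (fun x => fderiv ℝ (fun y => gradient f y) x
        (EuclideanSpace.single i 1)) s := h3.clm_apply continuousOn_const
    exact (EuclideanSpace.proj i : E →L[ℝ] ℝ).continuous.comp_continuousOn h4
  exact this

end Aux



namespace Aux2

variable {ε : ℝ}

/-- smooth cutoff derivative profile -/
noncomputable def ρ (ε t : ℝ) : ℝ := Real.smoothTransition ((t ^ 2 - ε ^ 2) / ε ^ 2)

/-- truncation of identity -/
noncomputable def θ (ε t : ℝ) : ℝ := ∫ s in (0:ℝ)..t, ρ ε s

/-- primitive of θ -/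
noncomputable def ψ (ε t : ℝ) : ℝ := ∫ s in (0:ℝ)..t, θ ε s

lemma ρ_cont : Continuous (ρ ε) :=
  Real.smoothTransition.continuous.comp (by fun_prop)

lemma ρ_nonneg (t : ℝ) : 0 ≤ ρ ε t := Real.smoothTransition.nonneg _

lemma ρ_le_one (t : ℝ) : ρ ε t ≤ 1 := Real.smoothTransition.le_one _

lemma ρ_eq_zero (hε : 0 < ε) {t : ℝ} (ht : |t| ≤ ε) : ρ ε t = 0 := by
  apply Real.smoothTransition.zero_of_nonpos
  apply div_nonpos_of_nonpos_of_nonneg _ (by positivity)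
  have : t ^ 2 ≤ ε ^ 2 := by
    rw [← sq_abs t, ← sq_abs ε]
    exact pow_le_pow_left₀ (abs_nonneg t) (le_trans ht (le_abs_self ε)) 2
  linarith

lemma ρ_eq_one (hε : 0 < ε) {t : ℝ} (ht : Real.sqrt 2 * ε ≤ |t|) : ρ ε t = 1 := by
  apply Real.smoothTransition.one_of_one_le
  rw [le_div_iff₀ (by positivity)]
  have h2 : 2 * ε ^ 2 ≤ t ^ 2 := by
    have := pow_le_pow_left₀ (by positivity) ht 2
    rw [mul_pow, sq_abs, Real.sq_sqrt (by norm_num : (2:ℝ) ≥ 0)] at this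
    linarith
  linarith

lemma θ_hasDerivAt (t : ℝ) : HasDerivAt (θ ε) (ρ ε t) t :=
  intervalIntegral.integral_hasDerivAt_right ((ρ_cont).intervalIntegrable _ _)
    ((ρ_cont).stronglyMeasurableAtFilter _ _) (ρ_cont).continuousAt

lemma θ_cont : Continuous (θ ε) :=
  continuous_iff_continuousAt.2 fun t => (θ_hasDerivAt t).continuousAt

lemma abs_le_of_mem_uIcc {s t : ℝ} (hs : s ∈ Set.uIcc 0 t) : |s| ≤ |t| := by
  rcases le_total 0 t with h | h
  · rw [Set.uIcc_of_le h] at hs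
    rw [abs_of_nonneg hs.1, abs_of_nonneg h]; exact hs.2
  · rw [Set.uIcc_of_ge h] at hs
    rw [abs_of_nonpos hs.2, abs_of_nonpos h]; linarith [hs.1]

lemma θ_eq_zero (hε : 0 < ε) {t : ℝ} (ht : |t| ≤ ε) : θ ε t = 0 := by
  unfold θ
  rw [intervalIntegral.integral_congr (g := fun _ => (0:ℝ))
    (fun s hs => ρ_eq_zero hε (le_trans (abs_le_of_mem_uIcc hs) ht))]
  simp

lemma θ_abs_le (t : ℝ) : |θ ε t| ≤ |t| := by
  have := intervalIntegral.norm_integral_le_of_norm_le_const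
    (C := 1) (f := ρ ε) (a := 0) (b := t) (fun s _ => by
      rw [Real.norm_eq_abs, abs_of_nonneg (ρ_nonneg s)]; exact ρ_le_one s)
  simpa [θ, Real.norm_eq_abs] using this

lemma θ_nonneg {t : ℝ} (ht : 0 ≤ t) : 0 ≤ θ ε t :=
  intervalIntegral.integral_nonneg ht (fun s _ => ρ_nonneg s)

lemma θ_nonpos {t : ℝ} (ht : t ≤ 0) : θ ε t ≤ 0 := by
  have h0 : (0:ℝ) ≤ ∫ s in t..(0:ℝ), ρ ε s :=
    intervalIntegral.integral_nonneg ht (fun s _ => ρ_nonneg s)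
  have hsymm := intervalIntegral.integral_symm (a := 0) (b := t) (f := ρ ε) (μ := volume)
  unfold θ
  linarith [h0, hsymm]

lemma θ_sub_abs_le (hε : 0 < ε) (t : ℝ) : |θ ε t - t| ≤ 2 * ε := by
  have key : ∀ t : ℝ, 0 ≤ t → |θ ε t - t| ≤ 2 * ε := by
    intro t ht
    have hsub : θ ε t - t = ∫ s in (0:ℝ)..t, (ρ ε s - 1) := by
      rw [intervalIntegral.integral_sub ((ρ_cont).intervalIntegrable _ _)
        (intervalIntegrable_const)]
      simp [θ, mul_comm]
    set c := Real.sqrt 2 * ε with hc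
    have hc0 : 0 < c := by positivity
    have hcε : c ≤ 2 * ε := by
      have : Real.sqrt 2 ≤ 2 := by
        nlinarith [Real.sq_sqrt (show (0:ℝ) ≤ 2 by norm_num), Real.sqrt_nonneg 2]
      nlinarith
    have hbound : ∀ a b : ℝ, 0 ≤ a → b ≤ c → a ≤ b →
        |∫ s in a..b, (ρ ε s - 1)| ≤ 2 * ε := by
      intro a b ha hbc hab
      have := intervalIntegral.norm_integral_le_of_norm_le_const
        (C := 1) (f := fun s => ρ ε s - 1) (a := a) (b := b) (fun s _ => by
          rw [Real.norm_eq_abs, abs_le]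
          refine ⟨?_, ?_⟩
          · linarith [ρ_nonneg (ε := ε) s]
          · linarith [ρ_le_one (ε := ε) s])
      rw [Real.norm_eq_abs] at this
      calc |∫ s in a..b, (ρ ε s - 1)| ≤ 1 * |b - a| := this
        _ ≤ 2 * ε := by rw [one_mul, abs_of_nonneg (by linarith)]; linarith
    rcases le_total t c with h | h
    · rw [hsub]; exact hbound 0 t le_rfl h ht
    · have hsplit : (∫ s in (0:ℝ)..t, (ρ ε s - 1))
          = (∫ s in (0:ℝ)..c, (ρ ε s - 1)) + ∫ s in c..t, (ρ ε s - 1) := by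
        rw [intervalIntegral.integral_add_adjacent_intervals] <;>
          exact ((ρ_cont).sub continuous_const).intervalIntegrable _ _
      have hzero : (∫ s in c..t, (ρ ε s - 1)) = 0 := by
        rw [intervalIntegral.integral_congr (g := fun _ => (0:ℝ))]
        · simp
        · intro s hs
          rw [Set.uIcc_of_le h] at hs
          have : c ≤ |s| := le_trans hs.1 (le_abs_self s)
          simp [ρ_eq_one hε this]
      rw [hsub, hsplit, hzero, add_zero]
      exact hbound 0 c le_rfl le_rfl hc0.le
  rcases le_total 0 t with ht | ht
  · exact key t ht
  · have hodd : ∀ r : ℝ, θ ε (-r) = - θ ε r := by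
      intro r
      have heven : ∀ x : ℝ, ρ ε (-x) = ρ ε x := by
        intro x; unfold ρ; congr 1; ring
      have h1 : (∫ x in (0:ℝ)..r, ρ ε (-x)) = ∫ x in (-r)..(-(0:ℝ)), ρ ε x :=
        intervalIntegral.integral_comp_neg (fun x => ρ ε x)
      have h2 : (∫ x in (0:ℝ)..r, ρ ε (-x)) = θ ε r := by
        unfold θ
        exact intervalIntegral.integral_congr (fun s _ => heven s)
      have h3 := intervalIntegral.integral_symm (a := (-r)) (b := (0:ℝ)) (f := ρ ε)
        (μ := volume)
      unfold θ
      rw [h3, ← show ∫ x in (-r)..(-(0:ℝ)), ρ ε x = ∫ x in (-r)..(0:ℝ), ρ ε x by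
        norm_num, ← h1, h2]
      rfl
    have hk := key (-t) (by linarith)
    have ht2 : θ ε t = - θ ε (-t) := by rw [hodd]; ring
    rw [ht2, show -θ ε (-t) - t = -(θ ε (-t) - (-t)) by ring, abs_neg]
    exact hk

lemma ψ_hasDerivAt (t : ℝ) : HasDerivAt (ψ ε) (θ ε t) t :=
  intervalIntegral.integral_hasDerivAt_right ((θ_cont).intervalIntegrable _ _)
    ((θ_cont).stronglyMeasurableAtFilter _ _) (θ_cont).continuousAt

lemma ψ_nonneg (t : ℝ) : 0 ≤ ψ ε t := by
  rcases le_total 0 t with h | h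
  · exact intervalIntegral.integral_nonneg h (fun s hs => θ_nonneg hs.1)
  · have h0 : (0:ℝ) ≤ ∫ s in t..(0:ℝ), -θ ε s :=
      intervalIntegral.integral_nonneg h (fun s hs => by
        simpa using θ_nonpos (ε := ε) hs.2)
    rw [intervalIntegral.integral_neg] at h0
    have hsymm := intervalIntegral.integral_symm (a := 0) (b := t) (f := θ ε) (μ := volume)
    unfold ψ
    linarith [h0, hsymm]

lemma ψ_eq_zero (hε : 0 < ε) {t : ℝ} (ht : |t| ≤ ε) : ψ ε t = 0 := by
  unfold ψ
  rw [intervalIntegral.integral_congr (g := fun _ => (0:ℝ))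
    (fun s hs => θ_eq_zero hε (le_trans (abs_le_of_mem_uIcc hs) ht))]
  simp

end Aux2

namespace Aux3

lemma fderiv_zero_of_eventually_zero {E F : Type*} [NormedAddCommGroup E] [NormedSpace ℝ E]
    [NormedAddCommGroup F] [NormedSpace ℝ F] {f : E → F} {x : E}
    (h : f =ᶠ[nhds x] (fun _ => (0:F))) : fderiv ℝ f x = 0 := by
  rw [h.fderiv_eq, fderiv_fun_const]
  rfl

/-- Divergence theorem: a differentiable compactly supported vector field on Euclidean
space has divergence with zero integral. -/
theorem integral_vdiv_eq_zero {n : ℕ}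
    (F : EuclideanSpace ℝ (Fin (n+1)) → EuclideanSpace ℝ (Fin (n+1)))
    (hFd : ∀ x, DifferentiableAt ℝ F x) (hsupp : HasCompactSupport F)
    (hint : Integrable (fun x => vdiv F x)) : ∫ x, vdiv F x = 0 := by
  classical
  let eL : EuclideanSpace ℝ (Fin (n+1)) ≃L[ℝ] (Fin (n+1) → ℝ) :=
    EuclideanSpace.equiv (Fin (n+1)) ℝ
  let g : (Fin (n+1) → ℝ) → (Fin (n+1) → ℝ) := ⇑eL ∘ F ∘ ⇑eL.symm
  have hgd : ∀ y, DifferentiableAt ℝ g y := fun y =>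
    (eL : EuclideanSpace ℝ (Fin (n+1)) →L[ℝ] (Fin (n+1) → ℝ)).differentiableAt.comp _
      ((hFd (eL.symm y)).comp _
        (eL.symm : (Fin (n+1) → ℝ) →L[ℝ] EuclideanSpace ℝ (Fin (n+1))).differentiableAt)
  have hfderiv : ∀ y, fderiv ℝ g y =
      ((eL : EuclideanSpace ℝ (Fin (n+1)) →L[ℝ] (Fin (n+1) → ℝ)).comp
        (fderiv ℝ F (eL.symm y))).comp
        (eL.symm : (Fin (n+1) → ℝ) →L[ℝ] EuclideanSpace ℝ (Fin (n+1))) := fun y =>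
    (((eL : EuclideanSpace ℝ (Fin (n+1)) →L[ℝ] (Fin (n+1) → ℝ)).hasFDerivAt.comp _
      ((hFd (eL.symm y)).hasFDerivAt.comp _
        (eL.symm : (Fin (n+1) → ℝ) →L[ℝ] EuclideanSpace ℝ (Fin (n+1))).hasFDerivAt))).fderiv
  have hdivg : ∀ y, (∑ i, fderiv ℝ g y (Pi.single i 1) i) = vdiv F (eL.symm y) := by
    intro y
    unfold vdiv
    refine Finset.sum_congr rfl fun i _ => ?_
    rw [hfderiv y]
    rfl
  have hgsupp : HasCompactSupport g := by
    have h1 : HasCompactSupport (⇑eL ∘ F) := hsupp.comp_left (by simp)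
    exact h1.comp_homeomorph eL.symm.toHomeomorph
  obtain ⟨R, hR⟩ := hgsupp.isCompact.isBounded.subset_closedBall 0
  have hR'pos : (0:ℝ) < |R| + 1 := by positivity
  have hsub : tsupport g ⊆ Metric.ball 0 (|R| + 1) := by
    refine hR.trans fun y hy => ?_
    simp only [Metric.mem_closedBall, Metric.mem_ball] at *
    calc dist y 0 ≤ R := hy
      _ < |R| + 1 := by cases abs_cases R <;> linarith
  set aa : Fin (n+1) → ℝ := fun _ => -(|R| + 1) with haa
  set bb : Fin (n+1) → ℝ := fun _ => (|R| + 1) with hbb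
  have hle : aa ≤ bb := fun i => by
    simp only [haa, hbb]
    linarith
  have hIccball : Metric.ball (0 : Fin (n+1) → ℝ) (|R| + 1) ⊆ Icc aa bb := by
    intro y hy
    simp only [Metric.mem_ball, dist_zero_right] at hy
    refine ⟨fun i => ?_, fun i => ?_⟩ <;>
      · have h1 := norm_le_pi_norm y i
        simp only [Real.norm_eq_abs] at h1
        have h2 : |y i| < |R| + 1 := lt_of_le_of_lt h1 hy
        simp only [haa, hbb]
        cases abs_cases (y i) <;> linarith
  have hdiveq : ∀ y, y ∉ tsupport g → (∑ i, fderiv ℝ g y (Pi.single i 1) i) = 0 := by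
    intro y hy
    have h0 : g =ᶠ[nhds y] (fun _ => 0) := by
      have hopen : IsOpen (tsupport g)ᶜ := (isClosed_tsupport g).isOpen_compl
      filter_upwards [hopen.mem_nhds hy] with z hz
      exact image_eq_zero_of_notMem_tsupport hz
    rw [fderiv_zero_of_eventually_zero h0]
    simp
  have hintg : Integrable (fun y => ∑ i, fderiv ℝ g y (Pi.single i 1) i) := by
    have hmp := (EuclideanSpace.volume_preserving_symm_measurableEquiv_toLp (Fin (n+1))).symm
    have hemb : MeasurableEmbedding ((MeasurableEquiv.toLp 2 (Fin (n+1) → ℝ)).symm).symm :=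
      ((MeasurableEquiv.toLp 2 (Fin (n+1) → ℝ)).symm).symm.measurableEmbedding
    have hcomp : (fun y => ∑ i, fderiv ℝ g y (Pi.single i 1) i)
        = (fun x => vdiv F x) ∘ ⇑((MeasurableEquiv.toLp 2 (Fin (n+1) → ℝ)).symm).symm := by
      funext y
      rw [hdivg y]
      rfl
    rw [hcomp]
    exact (hmp.integrable_comp_emb hemb).2 hint
  have hdivthm := MeasureTheory.integral_divergence_of_hasFDerivAt_off_countable
    aa bb hle g (fun x => fderiv ℝ g x) ∅ countable_empty
    (Continuous.continuousOn (continuous_iff_continuousAt.2 fun y => (hgd y).continuousAt))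
    (fun x _ => (hgd x).hasFDerivAt) (hintg.integrableOn)
  have hfaces : ∀ (i : Fin (n+1)) (c : ℝ), |c| = |R| + 1 →
      ∀ x : Fin n → ℝ, g (i.insertNth c x) i = 0 := by
    intro i c hc x
    have hnot : i.insertNth c x ∉ tsupport g := by
      intro hmem
      have h3 := hsub hmem
      simp only [Metric.mem_ball, dist_zero_right] at h3
      have h1 := @norm_le_pi_norm (Fin (n+1)) (fun _ => ℝ) _ _ (i.insertNth c x) i
      rw [Fin.insertNth_apply_same] at h1
      simp only [Real.norm_eq_abs] at h1
      rw [hc] at h1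
      linarith
    rw [image_eq_zero_of_notMem_tsupport hnot]
    rfl
  have hrhs : (∑ i : Fin (n + 1),
      ((∫ x in Icc (aa ∘ i.succAbove) (bb ∘ i.succAbove), g (i.insertNth (bb i) x) i) -
       (∫ x in Icc (aa ∘ i.succAbove) (bb ∘ i.succAbove), g (i.insertNth (aa i) x) i)) = 0) := by
    refine Finset.sum_eq_zero fun i _ => ?_
    rw [setIntegral_congr_fun measurableSet_Icc (g := fun _ => (0:ℝ))
        (fun x _ => hfaces i (bb i) (by rw [hbb]; exact abs_of_pos hR'pos) x),
      setIntegral_congr_fun measurableSet_Icc (g := fun _ => (0:ℝ))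
        (fun x _ => hfaces i (aa i) (by rw [haa]; rw [show (fun (_ : Fin (n+1)) => -(|R| + 1)) i = -(|R|+1) from rfl, abs_neg]; exact abs_of_pos hR'pos) x)]
    simp
  rw [hrhs] at hdivthm
  have hext : (∫ y in Icc aa bb, ∑ i, fderiv ℝ g y (Pi.single i 1) i)
      = ∫ y, ∑ i, fderiv ℝ g y (Pi.single i 1) i := by
    apply setIntegral_eq_integral_of_forall_compl_eq_zero
    intro y hy
    apply hdiveq
    intro hmem
    exact hy (hIccball (hsub hmem))
  have hmp2 := EuclideanSpace.volume_preserving_symm_measurableEquiv_toLp (Fin (n+1))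
  have hemb2 : MeasurableEmbedding ⇑((MeasurableEquiv.toLp 2 (Fin (n+1) → ℝ)).symm) :=
    ((MeasurableEquiv.toLp 2 (Fin (n+1) → ℝ)).symm).measurableEmbedding
  have htrans := hmp2.integral_comp hemb2 (fun y => ∑ i, fderiv ℝ g y (Pi.single i 1) i)
  have hvF : (fun x : EuclideanSpace ℝ (Fin (n+1)) =>
      (∑ i, fderiv ℝ g (((MeasurableEquiv.toLp 2 (Fin (n+1) → ℝ)).symm) x) (Pi.single i 1) i))
      = fun x => vdiv F x := by
    funext x
    rw [hdivg]
    rfl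
  calc ∫ x, vdiv F x
      = ∫ x : EuclideanSpace ℝ (Fin (n+1)),
          ∑ i, fderiv ℝ g (((MeasurableEquiv.toLp 2 (Fin (n+1) → ℝ)).symm) x)
          (Pi.single i 1) i := by rw [hvF]
    _ = ∫ y, ∑ i, fderiv ℝ g y (Pi.single i 1) i := htrans
    _ = ∫ y in Icc aa bb, ∑ i, fderiv ℝ g y (Pi.single i 1) i := hext.symm
    _ = 0 := by rw [← hdivthm]

end Aux3

namespace Aux4
open Aux

variable {N : ℕ}
local notation "E" => EuclideanSpace ℝ (Fin N)

lemma vdiv_formula {u w : E → ℝ} {x : E}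
    (hu : ContDiffAt ℝ 2 u x) (hw : ContDiffAt ℝ 2 w x)
    {θ ρf ψf : ℝ → ℝ} (hθ : ∀ t, HasDerivAt θ (ρf t) t)
    (hψ : ∀ t, HasDerivAt ψf (θ t) t) :
    vdiv (fun y => (w y * θ (u y)) • gradient u y - ψf (u y) • gradient w y) x
      = w x * ρf (u x) * ‖gradient u x‖ ^ 2 + w x * θ (u x) * lap u x
        - ψf (u x) * lap w x := by
  have hud : DifferentiableAt ℝ u x := hu.differentiableAt two_ne_zero
  have hwd : DifferentiableAt ℝ w x := hw.differentiableAt two_ne_zero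
  have hgu : DifferentiableAt ℝ (fun y => gradient u y) x := differentiableAt_gradient hu
  have hgw : DifferentiableAt ℝ (fun y => gradient w y) x := differentiableAt_gradient hw
  have hθu : HasFDerivAt (fun y => θ (u y)) (ρf (u x) • fderiv ℝ u x) x :=
    (hθ (u x)).comp_hasFDerivAt x hud.hasFDerivAt
  have hA : HasFDerivAt (fun y => w y * θ (u y))
      (w x • (ρf (u x) • fderiv ℝ u x) + θ (u x) • fderiv ℝ w x) x :=
    hwd.hasFDerivAt.mul hθu
  have hB : HasFDerivAt (fun y => ψf (u y)) (θ (u x) • fderiv ℝ u x) x :=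
    (hψ (u x)).comp_hasFDerivAt x hud.hasFDerivAt
  have h1 : vdiv (fun y => (w y * θ (u y)) • gradient u y) x
      = (w x • (ρf (u x) • fderiv ℝ u x) + θ (u x) • fderiv ℝ w x) (gradient u x)
        + (w x * θ (u x)) * lap u x := vdiv_smul hA hgu
  have h2 : vdiv (fun y => ψf (u y) • gradient w y) x
      = (θ (u x) • fderiv ℝ u x) (gradient w x) + ψf (u x) * lap w x := vdiv_smul hB hgw
  have hsub : vdiv (fun y => (w y * θ (u y)) • gradient u y - ψf (u y) • gradient w y) x
      = vdiv (fun y => (w y * θ (u y)) • gradient u y) x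
        - vdiv (fun y => ψf (u y) • gradient w y) x :=
    vdiv_sub (hA.differentiableAt.smul hgu) (hB.differentiableAt.smul hgw)
  rw [hsub, h1, h2]
  simp only [ContinuousLinearMap.add_apply, ContinuousLinearMap.smul_apply, smul_eq_mul]
  have e1 : fderiv ℝ u x (gradient u x) = ‖gradient u x‖ ^ 2 := by
    rw [fderiv_apply_eq_inner, real_inner_self_eq_norm_sq]
  have e2 : fderiv ℝ w x (gradient u x) = fderiv ℝ u x (gradient w x) := by
    rw [fderiv_apply_eq_inner, fderiv_apply_eq_inner, real_inner_comm]
  rw [e1, e2]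
  ring

lemma lap_inv_nonpos {c : E → ℝ} {x : E} {s : Set (E)} (hs : IsOpen s) (hx : x ∈ s)
    {α : ℝ} (hα : 0 ≤ α) (hc2 : ∀ y ∈ s, ContDiffAt ℝ 2 c y)
    (hcpos : ∀ y ∈ s, 0 < c y)
    (hcond : 2 * ‖gradient c x‖ ^ 2 / c x ≤ lap c x) :
    lap (fun y => (c y + α)⁻¹) x ≤ 0 := by
  have hcx : 0 < c x := hcpos x hx
  have htpos : ∀ y ∈ s, 0 < c y + α := fun y hy => by linarith [hcpos y hy]
  have hq : ∀ y ∈ s, gradient (fun z => (c z + α)⁻¹) y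
      = (-(((c y) + α) ^ 2)⁻¹) • gradient c y := by
    intro y hy
    have hder0 : HasDerivAt (fun t : ℝ => (t + α)⁻¹)
        (-1 / ((c y + α) ^ 2)) (c y) :=
      ((hasDerivAt_id (c y)).add_const α).inv (ne_of_gt (htpos y hy))
    have hder : HasDerivAt (fun t : ℝ => (t + α)⁻¹)
        (-(((c y) + α) ^ 2)⁻¹) (c y) := by
      convert hder0 using 1
      field_simp
    exact gradient_comp hder ((hc2 y hy).differentiableAt two_ne_zero)
  have hev : (fun y => gradient (fun z => (c z + α)⁻¹) y)
      =ᶠ[nhds x] (fun y => (-(((c y) + α) ^ 2)⁻¹) • gradient c y) := by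
    filter_upwards [hs.mem_nhds hx] with y hy using hq y hy
  have hlap : lap (fun y => (c y + α)⁻¹) x
      = vdiv (fun y => (-(((c y) + α) ^ 2)⁻¹) • gradient c y) x :=
    vdiv_congr_nhds hev
  -- derivative of the scalar factor
  have hcd : DifferentiableAt ℝ c x := (hc2 x hx).differentiableAt two_ne_zero
  have hsq : HasDerivAt (fun t : ℝ => ((t + α) ^ 2)) (2 * (c x + α)) (c x) := by
    have := (((hasDerivAt_id (c x)).add_const α).fun_pow 2)
    simpa using this
  have hinv : HasDerivAt (fun t : ℝ => -(((t + α) ^ 2)⁻¹))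
      (2 * (c x + α) / ((c x + α) ^ 2) ^ 2) (c x) := by
    have h2 := (hsq.fun_inv (by positivity)).fun_neg
    exact h2.congr_deriv (by ring)
  have hm : HasFDerivAt (fun y => -(((c y) + α) ^ 2)⁻¹)
      ((2 * (c x + α) / ((c x + α) ^ 2) ^ 2) • fderiv ℝ c x) x :=
    hinv.comp_hasFDerivAt x hcd.hasFDerivAt
  have hgc : DifferentiableAt ℝ (fun y => gradient c y) x :=
    differentiableAt_gradient (hc2 x hx)
  have hvd : vdiv (fun y => (-(((c y) + α) ^ 2)⁻¹) • gradient c y) x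
      = ((2 * (c x + α) / ((c x + α) ^ 2) ^ 2) • fderiv ℝ c x) (gradient c x)
        + (-(((c x) + α) ^ 2)⁻¹) * lap c x := vdiv_smul hm hgc
  rw [hlap, hvd]
  simp only [ContinuousLinearMap.smul_apply, smul_eq_mul]
  rw [fderiv_apply_eq_inner, real_inner_self_eq_norm_sq]
  set G := ‖gradient c x‖ ^ 2 with hG
  set L := lap c x with hL
  set t := c x + α with ht
  have htp : 0 < t := htpos x hx
  have hGnn : 0 ≤ G := by positivity
  have key : 2 * G / t ≤ L := by
    refine le_trans ?_ hcond
    apply div_le_div_of_nonneg_left (by linarith) hcx (by linarith)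
  have heq : 2 * t / (t ^ 2) ^ 2 * G + (-(t ^ 2)⁻¹) * L = (2 * G / t - L) / t ^ 2 := by
    field_simp
    ring
  rw [heq]
  apply div_nonpos_of_nonpos_of_nonneg (by linarith) (by positivity)

end Aux4

namespace Aux5
open Aux Aux3 Aux4

variable {n : ℕ}
local notation "E" => EuclideanSpace ℝ (Fin (n+1))

lemma eps_step (Ω : Set (E)) (hΩ : IsOpen Ω) (hΩb : Bornology.IsBounded Ω)
    (u w : E → ℝ)
    (hu : ContDiffOn ℝ 2 u (closure Ω))
    (hu0 : ∀ x ∈ frontier Ω, u x = 0)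
    (hw2 : ∀ x ∈ Ω, ContDiffAt ℝ 2 w x)
    (hwΩ : ContDiffOn ℝ 2 w Ω)
    (hw0 : ∀ x ∈ Ω, 0 ≤ w x)
    (hlapw : ∀ x ∈ Ω, lap w x ≤ 0)
    {ε : ℝ} (hε : 0 < ε) :
    IntegrableOn (fun x => w x * Aux2.θ ε (u x) * lap u x) Ω volume ∧
    (∫ x in Ω, w x * Aux2.θ ε (u x) * lap u x) ≤ 0 := by
  classical
  have huΩ : ContDiffOn ℝ 2 u Ω := hu.mono subset_closure
  have hu2 : ∀ x ∈ Ω, ContDiffAt ℝ 2 u x := fun x hx =>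
    contDiffAt_of_contDiffOn_closure hΩ hx hu
  have huc : ContinuousOn u (closure Ω) := hu.continuousOn
  -- the compact set K
  set K : Set (E) := {x ∈ closure Ω | ε ≤ |u x|} with hK
  have hKcomp : IsCompact K := by
    have hcc : IsCompact (closure Ω) := hΩb.isCompact_closure
    have : CompactSpace (closure Ω) := isCompact_iff_compactSpace.1 hcc
    have hrc : Continuous fun y : (closure Ω : Set (E)) => |u y.1| :=
      (continuousOn_iff_continuous_restrict.1 huc).abs
    have hS : IsCompact {y : (closure Ω : Set (E)) | ε ≤ |u y.1|} :=
      (isClosed_le continuous_const hrc).isCompact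
    have himg : Subtype.val '' {y : (closure Ω : Set (E)) | ε ≤ |u y.1|} = K := by
      ext x
      constructor
      · rintro ⟨⟨y, hy⟩, hmem, rfl⟩
        exact ⟨hy, hmem⟩
      · rintro ⟨hx1, hx2⟩
        exact ⟨⟨x, hx1⟩, hx2, rfl⟩
    rw [← himg]
    exact hS.image continuous_subtype_val
  have hKΩ : K ⊆ Ω := by
    rintro x ⟨hx1, hx2⟩
    by_contra hxΩ
    have hfr : x ∈ frontier Ω := by
      rw [hΩ.frontier_eq]
      exact ⟨hx1, hxΩ⟩
    rw [hu0 x hfr] at hx2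
    simp at hx2
    linarith
  have hKclosed : IsClosed K := hKcomp.isClosed
  -- the vector field
  set Fraw : E → E := fun y =>
    (w y * Aux2.θ ε (u y)) • gradient u y - Aux2.ψ ε (u y) • gradient w y with hFraw
  set F : E → E := Ω.indicator Fraw with hF
  have hFn0 : ∀ y ∉ K, F y = 0 := by
    intro y hy
    by_cases hyΩ : y ∈ Ω
    · have hyu : |u y| < ε := by
        by_contra hcon
        exact hy ⟨subset_closure hyΩ, le_of_not_gt hcon⟩
      have hθ0 : Aux2.θ ε (u y) = 0 := Aux2.θ_eq_zero hε hyu.le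
      have hψ0 : Aux2.ψ ε (u y) = 0 := Aux2.ψ_eq_zero hε hyu.le
      rw [hF, Set.indicator_of_mem hyΩ, hFraw]
      simp [hθ0, hψ0]
    · rw [hF, Set.indicator_of_notMem hyΩ]
  have hFΩ : ∀ x ∈ Ω, F =ᶠ[nhds x] Fraw := by
    intro x hx
    filter_upwards [hΩ.mem_nhds hx] with y hy using Set.indicator_of_mem hy _
  have hF0nhds : ∀ y ∉ K, F =ᶠ[nhds y] (fun _ => (0:E)) := by
    intro y hy
    filter_upwards [hKclosed.isOpen_compl.mem_nhds hy] with z hz using hFn0 z hz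
  -- differentiability of Fraw on Ω
  have hFrawdiff : ∀ x ∈ Ω, DifferentiableAt ℝ Fraw x := by
    intro x hx
    have hud : DifferentiableAt ℝ u x := (hu2 x hx).differentiableAt two_ne_zero
    have hwd : DifferentiableAt ℝ w x := (hw2 x hx).differentiableAt two_ne_zero
    have hgu : DifferentiableAt ℝ (fun y => gradient u y) x :=
      differentiableAt_gradient (hu2 x hx)
    have hgw : DifferentiableAt ℝ (fun y => gradient w y) x :=
      differentiableAt_gradient (hw2 x hx)
    have hθu : DifferentiableAt ℝ (fun y => Aux2.θ ε (u y)) x :=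
      ((Aux2.θ_hasDerivAt (u x)).comp_hasFDerivAt x hud.hasFDerivAt).differentiableAt
    have hψu : DifferentiableAt ℝ (fun y => Aux2.ψ ε (u y)) x :=
      ((Aux2.ψ_hasDerivAt (u x)).comp_hasFDerivAt x hud.hasFDerivAt).differentiableAt
    exact ((hwd.mul hθu).smul hgu).sub (hψu.smul hgw)
  have hFd : ∀ y, DifferentiableAt ℝ F y := by
    intro y
    by_cases hy : y ∈ Ω
    · exact (hFrawdiff y hy).congr_of_eventuallyEq (hFΩ y hy)
    · have : y ∉ K := fun h => hy (hKΩ h)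
      exact (differentiableAt_const (0:E)).congr_of_eventuallyEq (hF0nhds y this)
  -- divergence formula on Ω
  have hvdivF_eq : ∀ x ∈ Ω, vdiv F x
      = w x * Aux2.ρ ε (u x) * ‖gradient u x‖ ^ 2
        + w x * Aux2.θ ε (u x) * lap u x - Aux2.ψ ε (u x) * lap w x := by
    intro x hx
    rw [vdiv_congr_nhds (hFΩ x hx)]
    exact vdiv_formula (hu2 x hx) (hw2 x hx) (Aux2.θ_hasDerivAt) (Aux2.ψ_hasDerivAt)
  have hvdiv0 : ∀ y ∉ K, vdiv F y = 0 := by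
    intro y hy
    unfold vdiv
    rw [fderiv_zero_of_eventually_zero (hF0nhds y hy)]
    simp
  have hsupp : HasCompactSupport F := HasCompactSupport.intro hKcomp hFn0
  -- continuity of vdiv F
  have hucΩ : ContinuousOn u Ω := huc.mono subset_closure
  have hguc : ContinuousOn (fun y => gradient u y) Ω := continuousOn_gradient hΩ huΩ
  have hlapuc : ContinuousOn (lap u) Ω := continuousOn_lap hΩ huΩ
  have hlapwc : ContinuousOn (lap w) Ω := continuousOn_lap hΩ hwΩ
  have hwc : ContinuousOn w Ω := hwΩ.continuousOn
  have hrhscont : ContinuousOn (fun x =>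
      w x * Aux2.ρ ε (u x) * ‖gradient u x‖ ^ 2
        + w x * Aux2.θ ε (u x) * lap u x - Aux2.ψ ε (u x) * lap w x) Ω := by
    have hθc : Continuous (Aux2.θ ε) := Aux2.θ_cont
    have hψc : Continuous (Aux2.ψ ε) :=
      continuous_iff_continuousAt.2 fun t => (Aux2.ψ_hasDerivAt t).continuousAt
    exact (((hwc.mul (Aux2.ρ_cont.comp_continuousOn hucΩ)).mul
        ((hguc.norm).pow 2)).add
      ((hwc.mul (hθc.comp_continuousOn hucΩ)).mul hlapuc)).sub
      ((hψc.comp_continuousOn hucΩ).mul hlapwc)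
  have hvdivcontΩ : ContinuousOn (vdiv F) Ω :=
    hrhscont.congr fun x hx => hvdivF_eq x hx
  have hvdivcont : Continuous (vdiv F) := by
    rw [continuous_iff_continuousAt]
    intro y
    by_cases hy : y ∈ Ω
    · exact hvdivcontΩ.continuousAt (hΩ.mem_nhds hy)
    · have hyK : y ∉ K := fun h => hy (hKΩ h)
      have hev : (fun _ => (0:ℝ)) =ᶠ[nhds y] vdiv F := by
        filter_upwards [hKclosed.isOpen_compl.mem_nhds hyK] with z hz using
          (hvdiv0 z hz).symm
      exact continuousAt_const.congr hev
  have hvint : Integrable (vdiv F) volume :=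
    hvdivcont.integrable_of_hasCompactSupport
      (HasCompactSupport.intro hKcomp hvdiv0)
  have hzero : (∫ y, vdiv F y) = 0 := integral_vdiv_eq_zero F hFd hsupp hvint
  have hΩint_eq : (∫ x in Ω, vdiv F x) = ∫ x, vdiv F x :=
    setIntegral_eq_integral_of_forall_compl_eq_zero
      (fun y hy => hvdiv0 y (fun h => hy (hKΩ h)))
  -- the integrand φ
  set φ : E → ℝ := fun x => w x * Aux2.θ ε (u x) * lap u x with hφ
  have hφcont : ContinuousOn φ Ω :=
    (hwc.mul (Aux2.θ_cont.comp_continuousOn hucΩ)).mul hlapuc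
  have hφ0 : ∀ x ∈ Ω \ K, φ x = 0 := by
    rintro x ⟨hx1, hx2⟩
    have hyu : |u x| < ε := by
      by_contra hcon
      exact hx2 ⟨subset_closure hx1, le_of_not_gt hcon⟩
    rw [hφ]
    simp [Aux2.θ_eq_zero hε hyu.le]
  have hφint : IntegrableOn φ Ω volume := by
    have h1 : IntegrableOn φ K volume :=
      (hφcont.mono hKΩ).integrableOn_compact hKcomp
    have h2 : IntegrableOn φ (Ω \ K) volume := by
      rw [integrableOn_congr_fun hφ0 (hΩ.measurableSet.diff hKclosed.measurableSet)]
      exact integrableOn_zero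
    have h3 : IntegrableOn φ (K ∪ (Ω \ K)) volume := h1.union h2
    refine h3.mono_set fun x hx => ?_
    by_cases hxK : x ∈ K
    · exact Or.inl hxK
    · exact Or.inr ⟨hx, hxK⟩
  have hmono : ∀ x ∈ Ω, φ x ≤ vdiv F x := by
    intro x hx
    rw [hvdivF_eq x hx, hφ]
    dsimp only
    have h1 : 0 ≤ w x * Aux2.ρ ε (u x) * ‖gradient u x‖ ^ 2 :=
      mul_nonneg (mul_nonneg (hw0 x hx) (Aux2.ρ_nonneg _)) (by positivity)
    have h2 : 0 ≤ Aux2.ψ ε (u x) * (-(lap w x)) :=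
      mul_nonneg (Aux2.ψ_nonneg _) (by linarith [hlapw x hx])
    have h3 : Aux2.ψ ε (u x) * lap w x ≤ 0 := by nlinarith
    linarith
  refine ⟨hφint, ?_⟩
  calc (∫ x in Ω, φ x) ≤ ∫ x in Ω, vdiv F x :=
        setIntegral_mono_on hφint (hvint.integrableOn) hΩ.measurableSet hmono
    _ = 0 := by rw [hΩint_eq, hzero]

end Aux5

open Aux Aux3 Aux4 Aux5 Filter in
/-- Proposition 4.6(i): if Δ(a/b) ≥ 2|∇(a/b)|²/(a/b) then ∫ buΔu/(a+b‖∇u‖₂²) ≤ 0. -/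
theorem prop_four_six_i {N : ℕ} (Ω : Set (EuclideanSpace ℝ (Fin N)))
    (hΩ : IsOpen Ω) (hΩb : Bornology.IsBounded Ω)
    (a b : EuclideanSpace ℝ (Fin N) → ℝ)
    (ha : ContDiffOn ℝ 2 a (closure Ω)) (hb : ContDiffOn ℝ 2 b (closure Ω))
    (a0 b0 : ℝ) (ha0 : 0 < a0) (hb0 : 0 < b0)
    (haa : ∀ x ∈ closure Ω, a0 ≤ a x) (hbb : ∀ x ∈ closure Ω, b0 ≤ b x)
    (hcond : ∀ x ∈ Ω,
      2 * ‖gradient (fun y => a y / b y) x‖ ^ 2 / (a x / b x) ≤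
        lap (fun y => a y / b y) x) :
    ∀ u : EuclideanSpace ℝ (Fin N) → ℝ, ContDiffOn ℝ 2 u (closure Ω) →
      (∀ x ∈ frontier Ω, u x = 0) →
      ∀ α : ℝ, α = ∫ x in Ω, ‖gradient u x‖ ^ 2 →
      (∫ x in Ω, b x * u x * lap u x / (a x + b x * α)) ≤ 0 := by
  intro u hu hu0 α hα
  cases N with
  | zero =>
    have hlap0 : ∀ x, lap u x = 0 := fun x => by simp [lap, vdiv]
    simp only [hlap0, mul_zero, zero_div, integral_zero, le_refl]
  | succ n =>
    have hα0 : 0 ≤ α := by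
      rw [hα]; exact integral_nonneg fun x => by positivity
    have hapos : ∀ x ∈ closure Ω, 0 < a x := fun x hx => lt_of_lt_of_le ha0 (haa x hx)
    have hbpos : ∀ x ∈ closure Ω, 0 < b x := fun x hx => lt_of_lt_of_le hb0 (hbb x hx)
    have hden : ∀ x ∈ closure Ω, 0 < a x + b x * α := fun x hx => by
      have := mul_nonneg (hbpos x hx).le hα0
      linarith [hapos x hx]
    set w : EuclideanSpace ℝ (Fin (n+1)) → ℝ := fun x => b x / (a x + b x * α) with hwdef
    set g : EuclideanSpace ℝ (Fin (n+1)) → ℝ := fun x => w x * u x * lap u x with hgdef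
    have hg_eq : ∀ x ∈ Ω, b x * u x * lap u x / (a x + b x * α) = g x := by
      intro x hx
      have hd := (hden x (subset_closure hx)).ne'
      rw [hgdef, hwdef]
      dsimp only
      field_simp
    have hint_congr : (∫ x in Ω, b x * u x * lap u x / (a x + b x * α)) = ∫ x in Ω, g x :=
      setIntegral_congr_fun hΩ.measurableSet fun x hx => hg_eq x hx
    rw [hint_congr]
    by_cases hgint : IntegrableOn g Ω volume
    swap
    · rw [integral_undef hgint]
    -- w properties
    have hw2 : ∀ x ∈ Ω, ContDiffAt ℝ 2 w x := by
      intro x hx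
      have hax : ContDiffAt ℝ 2 a x := contDiffAt_of_contDiffOn_closure hΩ hx ha
      have hbx : ContDiffAt ℝ 2 b x := contDiffAt_of_contDiffOn_closure hΩ hx hb
      exact hbx.div (hax.add (hbx.mul contDiffAt_const))
        (hden x (subset_closure hx)).ne'
    have hwΩ : ContDiffOn ℝ 2 w Ω :=
      (hb.mono subset_closure).div
        ((ha.mono subset_closure).add ((hb.mono subset_closure).mul contDiffOn_const))
        fun x hx => (hden x (subset_closure hx)).ne'
    have hw0 : ∀ x ∈ Ω, 0 ≤ w x := fun x hx =>
      le_of_lt (div_pos (hbpos x (subset_closure hx)) (hden x (subset_closure hx)))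
    -- lap w ≤ 0
    have hlapw : ∀ x ∈ Ω, lap w x ≤ 0 := by
      intro x hx
      have hceq : ∀ y ∈ Ω, w y = ((fun z => a z / b z) y + α)⁻¹ := by
        intro y hy
        have hby := (hbpos y (subset_closure hy)).ne'
        have hdy := (hden y (subset_closure hy)).ne'
        rw [hwdef]
        dsimp only
        rw [div_add' _ _ _ hby, inv_div]
        ring_nf
      have hlapeq : lap w x = lap (fun y => ((fun z => a z / b z) y + α)⁻¹) x := by
        apply lap_congr_nhds
        filter_upwards [hΩ.mem_nhds hx] with y hy using hceq y hy
      rw [hlapeq]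
      refine lap_inv_nonpos hΩ hx hα0 ?_ ?_ (hcond x hx)
      · intro y hy
        exact (contDiffAt_of_contDiffOn_closure hΩ hy ha).div
          (contDiffAt_of_contDiffOn_closure hΩ hy hb)
          (hbpos y (subset_closure hy)).ne'
      · intro y hy
        exact div_pos (hapos y (subset_closure hy)) (hbpos y (subset_closure hy))
    -- per-ε machinery
    have hstep : ∀ ε : ℝ, 0 < ε →
        IntegrableOn (fun x => w x * Aux2.θ ε (u x) * lap u x) Ω volume ∧
        (∫ x in Ω, w x * Aux2.θ ε (u x) * lap u x) ≤ 0 :=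
      fun ε hε => eps_step Ω hΩ hΩb u w hu hu0 hw2 hwΩ hw0 hlapw hε
    -- small sets
    set S : ℝ → Set (EuclideanSpace ℝ (Fin (n+1))) :=
      fun δ => Ω ∩ (fun x => |u x|) ⁻¹' Iio δ with hSdef
    have hScont : ContinuousOn (fun x => |u x|) Ω :=
      (hu.continuousOn.mono subset_closure).abs
    have hSopen : ∀ δ, IsOpen (S δ) := fun δ =>
      hScont.isOpen_inter_preimage hΩ isOpen_Iio
    have hSmeas : ∀ δ, MeasurableSet (S δ) := fun δ => (hSopen δ).measurableSet
    have hSsub : ∀ δ, S δ ⊆ Ω := fun δ => inter_subset_left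
    have hgu0 : ∀ x, u x = 0 → g x = 0 := by
      intro x hx
      rw [hgdef]
      dsimp only
      rw [hx]
      ring
    set M : ℝ := ∫ x in Ω, |g x| with hM
    have hM0 : 0 ≤ M := integral_nonneg fun x => abs_nonneg _
    -- main estimate for fixed δ and ε
    have hkey : ∀ δ : ℝ, 0 < δ → ∀ ε : ℝ, 0 < ε → ε ≤ δ / 2 →
        (∫ x in Ω, g x) ≤ 2 * (∫ x in S δ, |g x|) + (2 * ε / δ) * M := by
      intro δ hδ ε hε hεδ
      obtain ⟨hφint, hφle⟩ := hstep ε hε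
      set φ : EuclideanSpace ℝ (Fin (n+1)) → ℝ :=
        fun x => w x * Aux2.θ ε (u x) * lap u x with hφdef
      have hptw : ∀ x ∈ Ω, g x - φ x ≤
          2 * (S δ).indicator (fun y => |g y|) x + (2 * ε / δ) * |g x| := by
        intro x hx
        have hφg : |φ x| ≤ |g x| := by
          rw [hφdef, hgdef]
          dsimp only
          calc |w x * Aux2.θ ε (u x) * lap u x|
              = |w x| * |Aux2.θ ε (u x)| * |lap u x| := by rw [abs_mul, abs_mul]
            _ ≤ |w x| * |u x| * |lap u x| := by
                have hθa := Aux2.θ_abs_le (ε := ε) (u x)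
                gcongr
            _ = |w x * u x * lap u x| := by rw [abs_mul, abs_mul]
        by_cases hux : |u x| < δ
        · have hmemS : x ∈ S δ := by
            rw [hSdef]
            exact Set.mem_inter hx hux
          have hind : (S δ).indicator (fun y => |g y|) x = |g x| :=
            Set.indicator_of_mem hmemS _
          rw [hind]
          have h2 : g x - φ x ≤ |g x| + |φ x| := by
            have h3 := le_abs_self (g x)
            have h4 := neg_abs_le (φ x)
            linarith
          have h5 : (0:ℝ) ≤ (2 * ε / δ) * |g x| := by positivity
          linarith
        · push_neg at hux
          have hind : (0:ℝ) ≤ (S δ).indicator (fun y => |g y|) x :=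
            Set.indicator_nonneg (fun y _ => abs_nonneg _) x
          set A : ℝ := |w x * lap u x| with hA
          have hgφ : g x - φ x = (u x - Aux2.θ ε (u x)) * (w x * lap u x) := by
            rw [hgdef, hφdef]; dsimp only; ring
          have habs : |g x - φ x| ≤ 2 * ε * A := by
            rw [hgφ, abs_mul]
            have h6 : |u x - Aux2.θ ε (u x)| ≤ 2 * ε := by
              have := Aux2.θ_sub_abs_le hε (u x)
              rw [abs_sub_comm] at this
              exact this
            exact mul_le_mul_of_nonneg_right h6 (abs_nonneg _)
          have hgA : |g x| = |u x| * A := by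
            rw [hgdef, hA]
            dsimp only
            rw [show w x * u x * lap u x = u x * (w x * lap u x) by ring, abs_mul]
          have hδA : δ * A ≤ |g x| := by
            rw [hgA]
            exact mul_le_mul_of_nonneg_right hux (abs_nonneg _)
          have hA0 : 0 ≤ A := abs_nonneg _
          have h7 : g x - φ x ≤ 2 * ε * A := le_trans (le_abs_self _) habs
          have h8 : 2 * ε * A ≤ (2 * ε / δ) * |g x| := by
            rw [show (2 * ε / δ) * |g x| = (2 * ε) * (|g x| / δ) by ring]
            apply mul_le_mul_of_nonneg_left _ (by positivity)
            rw [le_div_iff₀ hδ]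
            linarith [hδA]
          linarith
      have hindint : IntegrableOn ((S δ).indicator (fun y => |g y|)) Ω volume :=
        hgint.abs.indicator (hSmeas δ)
      have hrhsint : IntegrableOn (fun x =>
          2 * (S δ).indicator (fun y => |g y|) x + (2 * ε / δ) * |g x|) Ω volume :=
        (hindint.const_mul 2).add (hgint.abs.const_mul _)
      have hmono2 : (∫ x in Ω, (g x - φ x)) ≤
          ∫ x in Ω, (2 * (S δ).indicator (fun y => |g y|) x + (2 * ε / δ) * |g x|) :=
        setIntegral_mono_on (hgint.sub hφint) hrhsint hΩ.measurableSet hptw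
      have hsplit : (∫ x in Ω, (g x - φ x)) = (∫ x in Ω, g x) - ∫ x in Ω, φ x :=
        integral_sub hgint hφint
      have hrhseq : (∫ x in Ω,
          (2 * (S δ).indicator (fun y => |g y|) x + (2 * ε / δ) * |g x|))
          = 2 * (∫ x in S δ, |g x|) + (2 * ε / δ) * M := by
        rw [integral_add (hindint.const_mul 2) (hgint.abs.const_mul _),
          integral_const_mul, integral_const_mul,
          integral_indicator (hSmeas δ), Measure.restrict_restrict (hSmeas δ),
          Set.inter_eq_self_of_subset_left (hSsub δ), hM]
      rw [hsplit] at hmono2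
      rw [hrhseq] at hmono2
      linarith [hφle]
    -- take ε → 0
    have hkey2 : ∀ δ : ℝ, 0 < δ → (∫ x in Ω, g x) ≤ 2 * (∫ x in S δ, |g x|) := by
      intro δ hδ
      apply le_of_forall_pos_le_add
      intro η hη
      set ε : ℝ := min (δ / 2) (η * δ / (2 * (M + 1))) with hεdef
      have hε : 0 < ε := by
        apply lt_min (by positivity)
        positivity
      have hεa : ε ≤ δ / 2 := min_le_left _ _
      have hεb : ε ≤ η * δ / (2 * (M + 1)) := min_le_right _ _
      have h1 := hkey δ hδ ε hε hεa
      have h2 : (2 * ε / δ) * M ≤ η := by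
        have e1 : 2 * ε / δ * M ≤ 2 * (η * δ / (2 * (M + 1))) / δ * M := by
          gcongr
        have e2 : 2 * (η * δ / (2 * (M + 1))) / δ * M = η * (M / (M + 1)) := by
          field_simp
        have e3 : M / (M + 1) ≤ 1 := by
          rw [div_le_one (by linarith)]
          linarith
        have e4 : η * (M / (M + 1)) ≤ η * 1 :=
          mul_le_mul_of_nonneg_left e3 hη.le
        linarith
      linarith
    -- take δ → 0 along 1/(m+1)
    have hseq : Tendsto (fun m : ℕ => ∫ x in S (1 / (m + 1)), |g x|) atTop (nhds 0) := by
      have hdct := MeasureTheory.tendsto_integral_of_dominated_convergence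
        (F := fun m : ℕ => (S (1 / (m + 1))).indicator (fun y => |g y|))
        (f := fun _ => (0:ℝ)) (bound := fun x => |g x|)
        (μ := volume.restrict Ω)
        (fun m => (hgint.abs.aestronglyMeasurable.indicator (hSmeas _)))
        hgint.abs
        (fun m => Filter.Eventually.of_forall fun x => by
          rw [Real.norm_eq_abs]
          by_cases hx : x ∈ S (1 / (m + 1))
          · rw [Set.indicator_of_mem hx, abs_abs]
          · rw [Set.indicator_of_notMem hx]
            simp [abs_nonneg])
        (Filter.Eventually.of_forall fun x => ?_)
      · have hconv : (fun m : ℕ => ∫ a in Ω,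
            (S (1 / (m + 1))).indicator (fun y => |g y|) a)
            = fun m : ℕ => ∫ x in S (1 / (m + 1)), |g x| := by
          funext m
          rw [integral_indicator (hSmeas _), Measure.restrict_restrict (hSmeas _),
            Set.inter_eq_self_of_subset_left (hSsub _)]
        have h0 : Tendsto (fun m : ℕ => ∫ a in Ω,
            (S (1 / (m + 1))).indicator (fun y => |g y|) a) atTop
            (nhds (∫ _ in Ω, (0:ℝ))) := hdct
        rw [integral_zero] at h0
        rw [← hconv]
        exact h0
      · by_cases hxu : u x = 0
        · have : ∀ m : ℕ, (S (1 / (m + 1))).indicator (fun y => |g y|) x = 0 := by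
            intro m
            by_cases hx : x ∈ S (1 / (m + 1))
            · rw [Set.indicator_of_mem hx, hgu0 x hxu, abs_zero]
            · rw [Set.indicator_of_notMem hx]
          rw [show (fun m : ℕ => (S (1 / (m + 1))).indicator (fun y => |g y|) x)
            = fun _ => (0:ℝ) from funext this]
          exact tendsto_const_nhds
        · have habs : 0 < |u x| := abs_pos.2 hxu
          obtain ⟨m₀, hm₀⟩ := exists_nat_one_div_lt habs
          apply tendsto_atTop_of_eventually_const (i₀ := m₀)
          intro m hm
          apply Set.indicator_of_notMem
          intro hmem
          have h1 : |u x| < 1 / (m + 1) := hmem.2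
          have h2 : (1:ℝ) / (m + 1) ≤ 1 / (m₀ + 1) := by
            apply one_div_le_one_div_of_le (by positivity)
            have hcast : (m₀ : ℝ) ≤ (m : ℝ) := Nat.cast_le.2 hm
            linarith
          linarith
    have hfin : ∀ m : ℕ, (∫ x in Ω, g x) ≤ 2 * (∫ x in S (1 / (m + 1)), |g x|) :=
      fun m => hkey2 _ (by positivity)
    have hlim : Tendsto (fun m : ℕ => 2 * (∫ x in S (1 / (m + 1)), |g x|)) atTop
        (nhds 0) := by
      have := hseq.const_mul 2
      simpa using this
    exact ge_of_tendsto' hlim hfin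
end
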